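/- arXiv:1506.08738 — 7 statements merged into one kernel-verified Lean document; each statement's English description precedes it below -/
import Mathlib

section
/- Let (R,m) be a Noetherian local ring. Then at least one of the following holds: (1) R is Artinian; (2) R is regular of dimension 1; (3) depth_m R ≥ 2; (4) there exists a ring homomorphism φ: R → S that is not an isomorphism, whose kernel and cokernel are killed by a power of m, and such that m is not an associated prime of S (i.e., (R,m) is a non-normal pair). -/
lemma ass_subset_union {R M : Type*} [CommRing R] [AddCommGroup M] [Module R M]
    [IsNoetherianRing R] (N : Submodule R M) :
    associatedPrimes R M ⊆ associatedPrimes R N ∪ associatedPrimes R (M ⧸ N) := by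
  rintro p hp'
  obtain ⟨hp, x, hx⟩ := isAssociatedPrime_iff.mp (AssociatedPrimes.mem_iff.mp hp')
  rw [Submodule.bot_colon'] at hx
  have key : ∀ c : R, c ∈ p ↔ c • x = 0 := by
    intro c
    rw [hx, Submodule.mem_annihilator_span_singleton]
  by_cases hcap : ∀ a : R, a • x ∈ N → a ∈ p
  · right
    refine AssociatedPrimes.mem_iff.mpr (isAssociatedPrime_iff.mpr ⟨hp, N.mkQ x, ?_⟩)
    rw [Submodule.bot_colon']
    ext a
    rw [Submodule.mem_annihilator_span_singleton, ← map_smul, Submodule.mkQ_apply,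
      Submodule.Quotient.mk_eq_zero]
    constructor
    · intro h
      rw [(key a).mp h]; exact N.zero_mem
    · exact hcap a
  · left
    push_neg at hcap
    obtain ⟨a, haN, hap⟩ := hcap
    refine AssociatedPrimes.mem_iff.mpr (isAssociatedPrime_iff.mpr ⟨hp, ⟨a • x, haN⟩, ?_⟩)
    rw [Submodule.bot_colon']
    ext b
    rw [Submodule.mem_annihilator_span_singleton]
    constructor
    · intro hb
      ext
      simp only [SetLike.val_smul, ZeroMemClass.coe_zero]
      rw [smul_comm, (key b).mp hb, smul_zero]
    · intro hb
      have h2 : (b * a) • x = 0 := by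
        have := congrArg (Subtype.val) hb
        simpa [mul_smul] using this
      rcases hp.mem_or_mem ((key (b*a)).mpr h2) with h | h
      · exact h
      · exact absurd h hap

lemma ass_finite (R M : Type*) [CommRing R] [IsNoetherianRing R] [AddCommGroup M] [Module R M]
    [IsNoetherian R M] : (associatedPrimes R M).Finite := by
  -- every quotient has finite Ass
  have main : ∀ N : Submodule R M, (associatedPrimes R (M ⧸ N)).Finite := by
    by_contra hcon
    push_neg at hcon
    obtain ⟨N, hN, hmax⟩ := set_has_maximal_iff_noetherian.mpr ‹IsNoetherian R M›
      {N : Submodule R M | ¬ (associatedPrimes R (M ⧸ N)).Finite} hcon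
    rcases subsingleton_or_nontrivial (M ⧸ N) with hs | hnt
    · exact hN (by rw [associatedPrimes.eq_empty_of_subsingleton]; exact Set.finite_empty)
    · obtain ⟨p, hp⟩ := associatedPrimes.nonempty R (M ⧸ N)
      obtain ⟨hprime, x, hx⟩ := isAssociatedPrime_iff.mp (AssociatedPrimes.mem_iff.mp hp)
      rw [Submodule.bot_colon'] at hx
      have hx0 : x ≠ 0 := by
        rintro rfl
        apply hprime.ne_top
        rw [hx, Submodule.annihilator_eq_top_iff, Submodule.span_singleton_eq_bot]
      set N' : Submodule R M := (Submodule.span R {x}).comap N.mkQ with hN'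
      have hle : N ≤ N' := by
        intro a ha
        simp only [hN', Submodule.mem_comap, Submodule.mkQ_apply]
        rw [(Submodule.Quotient.mk_eq_zero N).mpr ha]
        exact Submodule.zero_mem _
      have hlt : N < N' := by
        obtain ⟨y, hy⟩ := Submodule.mkQ_surjective N x
        refine lt_of_le_of_ne hle (fun h => hx0 ?_)
        have hyN' : y ∈ N' := by
          simp only [hN', Submodule.mem_comap, hy]
          exact Submodule.mem_span_singleton_self x
        rw [← h] at hyN'
        rw [← hy, Submodule.mkQ_apply, Submodule.Quotient.mk_eq_zero]
        exact hyN'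
      have hfin' : (associatedPrimes R (M ⧸ N')).Finite := by
        by_contra hc
        exact hmax N' hc hlt
      -- Ass (M ⧸ N) ⊆ Ass (span x) ∪ Ass ((M⧸N)⧸span x)
      have hsub := ass_subset_union (M := M ⧸ N) (Submodule.span R {x})
      -- Ass (span x) = {p}
      have h1 : associatedPrimes R ↥(Submodule.span R {x}) = {p} := by
        have hker : LinearMap.ker (LinearMap.toSpanSingleton R (M ⧸ N) x) = p := by
          ext a
          rw [LinearMap.mem_ker, hx, Submodule.mem_annihilator_span_singleton]
          rfl
        have e1 : (R ⧸ p) ≃ₗ[R] ↥(Submodule.span R {x}) := by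
          rw [← hker, LinearMap.span_singleton_eq_range]
          exact (LinearMap.toSpanSingleton R (M ⧸ N) x).quotKerEquivRange
        rw [← LinearEquiv.AssociatedPrimes.eq e1]
        exact (associatedPrimes.eq_singleton_of_isPrimary hprime.isPrimary).trans (by rw [hprime.radical])
      -- ((M⧸N)⧸ span x) ≃ M ⧸ N'
      have h2 : associatedPrimes R ((M ⧸ N) ⧸ (Submodule.span R {x})) =
          associatedPrimes R (M ⧸ N') := by
        have hmap : N'.map N.mkQ = Submodule.span R {x} := by
          rw [hN', Submodule.map_comap_eq, Submodule.range_mkQ, top_inf_eq]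
        have e2 : ((M ⧸ N) ⧸ (N'.map N.mkQ)) ≃ₗ[R] M ⧸ N' :=
          Submodule.quotientQuotientEquivQuotient N N' hle
        rw [← hmap]
        exact LinearEquiv.AssociatedPrimes.eq e2
      apply hN
      refine Set.Finite.subset ?_ hsub
      rw [h1, h2]
      exact (Set.finite_singleton p).union hfin'
  have := main ⊥
  rwa [LinearEquiv.AssociatedPrimes.eq (Submodule.quotEquivOfEqBot ⊥ rfl)] at this

lemma socle_lemma {R M : Type*} [CommRing R] [IsNoetherianRing R] [AddCommGroup M] [Module R M]
    [IsNoetherian R M] [Nontrivial M] {m : Ideal R} (hm : m.IsMaximal)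
    (h : ∀ r ∈ m, ∃ x : M, x ≠ 0 ∧ r • x = 0) :
    ∃ x : M, x ≠ 0 ∧ ∀ a ∈ m, a • x = 0 := by
  have hfin := ass_finite R M
  have hsub : (m : Set R) ⊆ ⋃ p ∈ associatedPrimes R M, ↑p := by
    rw [biUnion_associatedPrimes_eq_zero_divisors]
    intro r hr
    exact h r hr
  obtain ⟨p, hpmem, hple⟩ : ∃ p ∈ associatedPrimes R M, m ≤ p := by
    have hco : (m : Set R) ⊆ ⋃ p ∈ hfin.toFinset, (p : Set R) := by
      intro r hr
      obtain ⟨p, hp1, hp2⟩ := Set.mem_iUnion₂.mp (hsub hr)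
      exact Set.mem_iUnion₂.mpr ⟨p, hfin.mem_toFinset.mpr hp1, hp2⟩
    have := (Ideal.subset_union_prime (⊥ : Ideal R) ⊥
      (fun p hp _ _ => (hfin.mem_toFinset.mp hp).isPrime)).mp hco
    obtain ⟨p, hp1, hp2⟩ := this
    exact ⟨p, hfin.mem_toFinset.mp hp1, hp2⟩
  have hpm : p = m := (hm.eq_of_le hpmem.isPrime.ne_top hple).symm
  obtain ⟨hprime, x, hx⟩ := isAssociatedPrime_iff.mp (AssociatedPrimes.mem_iff.mp hpmem)
  rw [Submodule.bot_colon'] at hx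
  refine ⟨x, ?_, ?_⟩
  · rintro rfl
    apply hprime.ne_top
    rw [hx, Submodule.annihilator_eq_top_iff, Submodule.span_singleton_eq_bot]
  · intro a ha
    rw [← Submodule.mem_annihilator_span_singleton, ← hx, hpm]
    exact ha

lemma helper_not_ass {R S : Type*} [CommRing R] [IsNoetherianRing R] [CommRing S] (φ : R →+* S) {m : Ideal R}
    (hm : m ≠ ⊤) (r : R) (hrm : r ∈ m) (hreg : ∀ s : S, φ r * s = 0 → s = 0) :
    (letI := φ.toAlgebra; m ∉ associatedPrimes R S) := by
  letI := φ.toAlgebra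
  intro hp'
  obtain ⟨hp, s, hsx⟩ := isAssociatedPrime_iff.mp (AssociatedPrimes.mem_iff.mp hp')
  rw [Submodule.bot_colon'] at hsx
  have hsmul : ∀ (c : R) (z : S), c • z = φ c * z := fun c z => rfl
  have hrs : r • s = 0 := by
    rw [← Submodule.mem_annihilator_span_singleton, ← hsx]
    exact hrm
  have hs0 : s = 0 := hreg s (by rw [← hsmul]; exact hrs)
  apply hm
  rw [Ideal.eq_top_iff_one, hsx, Submodule.mem_annihilator_span_singleton, hs0, smul_zero]

open IsLocalRing in
/-- Serre-type dichotomy for Noetherian local rings: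
Artinian, or regular of dimension 1, or depth ≥ 2, or a non-normal pair
(there is a finite-modification-type homomorphism φ : R → S, not an isomorphism,
with kernel and cokernel killed by a power of m and m not an associated prime of S). -/
theorem stmt0 (R : Type) [CommRing R] [IsLocalRing R] [IsNoetherianRing R] :
    IsArtinianRing R ∨
    -- regular of dimension 1: maximal ideal nonzero, principal, generated by a nonzerodivisor
    (∃ t : R, t ∈ nonZeroDivisors R ∧ IsLocalRing.maximalIdeal R = Ideal.span {t} ∧
      IsLocalRing.maximalIdeal R ≠ ⊥) ∨
    -- depth_m R ≥ 2: a regular sequence of length two inside m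
    (∃ r ∈ IsLocalRing.maximalIdeal R, r ∈ nonZeroDivisors R ∧
      ∃ s ∈ IsLocalRing.maximalIdeal R,
        ∀ x : R, s * x ∈ Ideal.span {r} → x ∈ Ideal.span {r}) ∨
    -- (R,m) is a non-normal pair
    (∃ (S : Type) (_ : CommRing S) (φ : R →+* S), ¬ Function.Bijective φ ∧
      (∃ n : ℕ,
        (∀ x ∈ RingHom.ker φ, ∀ y ∈ (IsLocalRing.maximalIdeal R) ^ n, y * x = 0) ∧
        (∀ s : S, ∀ y ∈ (IsLocalRing.maximalIdeal R) ^ n, φ y * s ∈ φ.range)) ∧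
      (letI := φ.toAlgebra; IsLocalRing.maximalIdeal R ∉ associatedPrimes R S)) := by
  classical
  by_cases hart : IsArtinianRing R
  · exact Or.inl hart
  rcases subsingleton_or_nontrivial R with hs | hnt
  · exact absurd isArtinian_of_finite hart
  right
  set m : Ideal R := maximalIdeal R with hm
  -- the ideal of elements killed by a power of m
  set H : Ideal R :=
    { carrier := {a | ∃ n : ℕ, ∀ y ∈ m ^ n, y * a = 0}
      zero_mem' := ⟨0, fun y _ => mul_zero y⟩
      add_mem' := by
        rintro a b ⟨n, hn⟩ ⟨k, hk⟩
        refine ⟨max n k, fun y hy => ?_⟩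
        rw [mul_add, hn y (Ideal.pow_le_pow_right (le_max_left n k) hy),
          hk y (Ideal.pow_le_pow_right (le_max_right n k) hy), add_zero]
      smul_mem' := by
        rintro c a ⟨n, hn⟩
        refine ⟨n, fun y hy => ?_⟩
        rw [smul_eq_mul, show y * (c * a) = c * (y * a) by ring, hn y hy, mul_zero] } with hH
  -- uniform bound on torsion exponents of H
  obtain ⟨N, hN⟩ : ∃ N : ℕ, ∀ a ∈ H, ∀ y ∈ m ^ N, y * a = 0 := by
    obtain ⟨s, hs⟩ := IsNoetherian.noetherian H
    have hf : ∀ g : R, ∃ n : ℕ, g ∈ H → ∀ y ∈ m ^ n, y * g = 0 := by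
      intro g
      by_cases hg : g ∈ H
      · obtain ⟨n, hn⟩ := hg
        exact ⟨n, fun _ => hn⟩
      · exact ⟨0, fun h => absurd h hg⟩
    choose f hfs using hf
    refine ⟨s.sup f, fun a ha y hy => ?_⟩
    have hle : H ≤ Submodule.annihilator (m ^ s.sup f : Ideal R) := by
      rw [← hs, Submodule.span_le]
      intro g hg
      rw [SetLike.mem_coe, Submodule.mem_annihilator]
      intro y' hy'
      rw [smul_eq_mul, mul_comm]
      exact hfs g (hs ▸ Ideal.subset_span hg) y'
        (Ideal.pow_le_pow_right (Finset.le_sup hg) hy')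
    have := Submodule.mem_annihilator.mp (hle ha) y hy
    rwa [smul_eq_mul, mul_comm] at this
  by_cases hHbot : H = ⊥
  · have hHmem : ∀ a : R, a ∈ H ↔ ∃ n : ℕ, ∀ y ∈ m ^ n, y * a = 0 := fun a => Iff.rfl
    have hmmax : m.IsMaximal := hm ▸ maximalIdeal.isMaximal R
    -- m contains a nonzerodivisor
    obtain ⟨r, hrm, hrnzd⟩ : ∃ r ∈ m, r ∈ nonZeroDivisors R := by
      by_contra hcon
      push_neg at hcon
      have hzd : ∀ r ∈ m, ∃ x : R, x ≠ 0 ∧ r • x = 0 := by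
        intro r hr
        have h2 := hcon r hr
        rw [mem_nonZeroDivisors_iff_right] at h2
        push_neg at h2
        obtain ⟨x, hx1, hx2⟩ := h2
        exact ⟨x, hx2, by rw [smul_eq_mul, mul_comm]; exact hx1⟩
      obtain ⟨x, hx0, hxm⟩ := socle_lemma hmmax hzd
      apply hx0
      have hxH : x ∈ H := (hHmem x).mpr ⟨1, fun y hy => by
        rw [pow_one] at hy
        have := hxm y hy
        rwa [smul_eq_mul] at this⟩
      rw [hHbot] at hxH
      exact (Submodule.mem_bot R).mp hxH
    by_cases hd2 : ∃ s ∈ m, ∀ x : R, s * x ∈ Ideal.span {r} → x ∈ Ideal.span {r}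
    · exact Or.inr (Or.inl ⟨r, hrm, hrnzd, hd2⟩)
    push_neg at hd2
    -- socle of R ⧸ (r)
    have hrnotunit : ¬ IsUnit r := by
      rw [hm] at hrm
      exact hrm
    have hrne : Ideal.span {r} ≠ ⊤ := by
      rw [Ne, Ideal.span_singleton_eq_top]
      exact hrnotunit
    haveI : Nontrivial (R ⧸ Ideal.span {r}) := Ideal.Quotient.nontrivial_iff.mpr hrne
    have hsmulq : ∀ (c x : R), c • (Ideal.Quotient.mk (Ideal.span {r}) x)
        = Ideal.Quotient.mk (Ideal.span {r}) (c * x) := fun c x => rfl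
    have hzd2 : ∀ s ∈ m, ∃ z : R ⧸ Ideal.span {r}, z ≠ 0 ∧ s • z = 0 := by
      intro s hsmem
      obtain ⟨x, hx1, hx2⟩ := hd2 s hsmem
      refine ⟨Ideal.Quotient.mk _ x, ?_, ?_⟩
      · rw [Ne, Ideal.Quotient.eq_zero_iff_mem]; exact hx2
      · rw [hsmulq, Ideal.Quotient.eq_zero_iff_mem]; exact hx1
    obtain ⟨xb, hxb0, hxbm⟩ := socle_lemma hmmax hzd2
    obtain ⟨x, rfl⟩ := Ideal.Quotient.mk_surjective xb
    have hxnotin : x ∉ Ideal.span {r} := fun h => hxb0 (Ideal.Quotient.eq_zero_iff_mem.mpr h)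
    have hxm : ∀ a ∈ m, a * x ∈ Ideal.span {r} := by
      intro a ha
      have := hxbm a ha
      rwa [hsmulq, Ideal.Quotient.eq_zero_iff_mem] at this
    by_cases hsubm : ∀ a ∈ m, ∃ w ∈ m, a * x = r * w
    · -- non-normal pair via localization
      right; right
      set Q := Localization.Away r with hQ
      set φ₀ : R →+* Q := algebraMap R Q with hφ₀
      have hrunit : IsUnit (φ₀ r) := IsLocalization.map_units Q ⟨r, Submonoid.mem_powers r⟩
      set i : Q := ↑hrunit.unit⁻¹ with hi
      have hri : φ₀ r * i = 1 := by
        rw [hi]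
        exact hrunit.mul_val_inv
      have hinj : Function.Injective φ₀ := by
        refine IsLocalization.injective (M := Submonoid.powers r) Q ?_
        intro y hy
        obtain ⟨n, rfl⟩ := hy
        exact pow_mem hrnzd n
      set θ : Q := φ₀ x * i with hθ
      have hkey : ∀ a ∈ m, ∃ w ∈ m, φ₀ a * θ = φ₀ w := by
        intro a ha
        obtain ⟨w, hwm, hw⟩ := hsubm a ha
        refine ⟨w, hwm, ?_⟩
        calc φ₀ a * θ = φ₀ (a * x) * i := by rw [hθ, map_mul, mul_assoc]
          _ = φ₀ w * (φ₀ r * i) := by rw [hw, map_mul]; ring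
          _ = φ₀ w := by rw [hri, mul_one]
      set A := Algebra.adjoin R {θ} with hA
      have hkey2 : ∀ s ∈ A, ∀ a ∈ m, ∃ w ∈ m, φ₀ a * s = φ₀ w := by
        intro s hsA
        induction hsA using Algebra.adjoin_induction with
        | mem t ht =>
          intro a ha
          rw [Set.mem_singleton_iff] at ht
          subst ht
          exact hkey a ha
        | algebraMap r₀ =>
          intro a ha
          exact ⟨a * r₀, Ideal.mul_mem_right r₀ m ha, by rw [map_mul]⟩
        | add s t hs ht ihs iht =>
          intro a ha
          obtain ⟨w1, hw1, he1⟩ := ihs a ha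
          obtain ⟨w2, hw2, he2⟩ := iht a ha
          exact ⟨w1 + w2, add_mem hw1 hw2, by rw [mul_add, he1, he2, map_add]⟩
        | mul s t hs ht ihs iht =>
          intro a ha
          obtain ⟨w1, hw1, he1⟩ := ihs a ha
          obtain ⟨w2, hw2, he2⟩ := iht w1 hw1
          exact ⟨w2, hw2, by rw [← mul_assoc, he1, he2]⟩
      refine ⟨A, inferInstance, algebraMap R A, ?_, ⟨1, ?_, ?_⟩, ?_⟩
      · -- not bijective
        intro hb
        obtain ⟨c, hc⟩ := hb.2 ⟨θ, Algebra.subset_adjoin rfl⟩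
        have hc' : φ₀ c = θ := congrArg Subtype.val hc
        have : c * r = x := by
          apply hinj
          rw [map_mul]
          calc φ₀ c * φ₀ r = θ * φ₀ r := by rw [hc']
            _ = φ₀ x * (φ₀ r * i) := by rw [hθ]; ring
            _ = φ₀ x := by rw [hri, mul_one]
        exact hxnotin (Ideal.mem_span_singleton'.mpr ⟨c, this⟩)
      · -- kernel
        intro z hz y _
        have : φ₀ z = 0 := congrArg Subtype.val hz
        have hz0 : z = 0 := hinj (by rw [this, map_zero])
        rw [hz0, mul_zero]
      · -- cokernel
        intro s y hy
        rw [pow_one] at hy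
        obtain ⟨w, _, hw⟩ := hkey2 ↑s s.2 y hy
        refine ⟨w, ?_⟩
        apply Subtype.ext
        show φ₀ w = ((algebraMap R A y * s : A) : Q)
        rw [← hw]
        rfl
      · -- ass
        apply helper_not_ass _ hmmax.ne_top r hrm
        intro s hs
        have hval : φ₀ r * (s : Q) = 0 := congrArg Subtype.val hs
        exact Subtype.ext (hrunit.mul_right_eq_zero.mp hval)
    · -- regular of dimension 1
      left
      push_neg at hsubm
      obtain ⟨a, ham, hnw⟩ := hsubm
      obtain ⟨c, hc⟩ := Ideal.mem_span_singleton'.mp (hxm a ham)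
      have hcunit : IsUnit c := by
        by_contra hcu
        refine hnw c (?_) (by rw [← hc]; ring)
        rw [hm]
        exact hcu
      set t : R := ↑hcunit.unit⁻¹ * a with ht
      have htx : t * x = r := by
        have h1 : (↑hcunit.unit⁻¹ : R) * c = 1 := hcunit.val_inv_mul
        calc t * x = ↑hcunit.unit⁻¹ * (a * x) := by rw [ht]; ring
          _ = ↑hcunit.unit⁻¹ * (c * r) := by rw [← hc]
          _ = (↑hcunit.unit⁻¹ * c) * r := by ring
          _ = r := by rw [h1, one_mul]
      have hrz : ∀ b : R, b * r = 0 → b = 0 := fun b hb =>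
        mem_nonZeroDivisors_iff_right.mp hrnzd b hb
      have hxnzd : ∀ b : R, b * x = 0 → b = 0 := by
        intro b hb
        apply hrz
        calc b * r = t * (b * x) := by rw [← htx]; ring
          _ = 0 := by rw [hb, mul_zero]
      have htm : t ∈ m := Ideal.mul_mem_left m _ ham
      refine ⟨t, ?_, ?_, ?_⟩
      · rw [mem_nonZeroDivisors_iff_right]
        intro b hb
        apply hrz
        calc b * r = x * (b * t) := by rw [← htx]; ring
          _ = 0 := by rw [hb, mul_zero]
      · apply le_antisymm
        · intro z hz
          obtain ⟨d, hd⟩ := Ideal.mem_span_singleton'.mp (hxm z hz)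
          have : (z - d * t) * x = 0 := by
            have : d * r = z * x := hd
            calc (z - d * t) * x = z * x - d * (t * x) := by ring
              _ = z * x - d * r := by rw [htx]
              _ = 0 := by rw [this, sub_self]
          have hz' : z = d * t := sub_eq_zero.mp (hxnzd _ this)
          exact Ideal.mem_span_singleton'.mpr ⟨d, hz'.symm⟩
        · rw [Ideal.span_le, Set.singleton_subset_iff]
          exact htm
      · intro hbot
        have : r = 0 := by rw [← Submodule.mem_bot R, ← hbot]; exact hrm
        exact one_ne_zero (hrz 1 (by rw [this, mul_zero]))
  · -- Case A : non-normal pair via R ⧸ H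
    right; right
    obtain ⟨a, haH, ha0⟩ := Submodule.ne_bot_iff H |>.mp hHbot
    refine ⟨R ⧸ H, inferInstance, Ideal.Quotient.mk H, ?_, ⟨N, ?_, ?_⟩, ?_⟩
    · intro hb
      exact ha0 (hb.injective (by
        rw [map_zero, Ideal.Quotient.eq_zero_iff_mem]; exact haH))
    · intro x hx y hy
      rw [Ideal.mk_ker] at hx
      exact hN x hx y hy
    · intro s y hy
      obtain ⟨a, rfl⟩ := Ideal.Quotient.mk_surjective s
      exact ⟨y * a, by rw [map_mul]⟩
    · intro hmem
      obtain ⟨hp, x, hx⟩ := isAssociatedPrime_iff.mp (AssociatedPrimes.mem_iff.mp hmem)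
      rw [Submodule.bot_colon'] at hx
      obtain ⟨b, rfl⟩ := Ideal.Quotient.mk_surjective x
      have hsmul : ∀ (c : R) (z : R ⧸ H), c • z = Ideal.Quotient.mk H c * z :=
        fun c z => rfl
      have hbH : b ∈ H := by
        have hmb : ∀ c ∈ m, c * b ∈ H := by
          intro c hc
          have : c • (Ideal.Quotient.mk H b) = 0 := by
            exact (Submodule.mem_annihilator_span_singleton _ _).mp (hx ▸ hc)
          rw [hsmul, ← map_mul, Ideal.Quotient.eq_zero_iff_mem] at this
          exact this
        refine ⟨N + 1, fun y hy => ?_⟩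
        have hle : m ^ N * m ≤ Submodule.annihilator (Submodule.span R {b}) := by
          rw [Ideal.mul_le]
          intro u hu v hv
          rw [Submodule.mem_annihilator_span_singleton, smul_eq_mul,
            mul_assoc]
          have := hN (v * b) (hmb v hv) u hu
          rwa [← mul_assoc] at this ⊢
        rw [pow_succ] at hy
        have := hle hy
        rwa [Submodule.mem_annihilator_span_singleton, smul_eq_mul] at this
      have hx0 : Ideal.Quotient.mk H b = 0 := by
        rw [Ideal.Quotient.eq_zero_iff_mem]; exact hbH
      have h1m : (1 : R) ∈ m := by
        rw [hx, hx0, Submodule.mem_annihilator_span_singleton]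
        exact smul_zero _
      exact (maximalIdeal.isMaximal R).ne_top (Ideal.eq_top_iff_one m |>.mpr h1m)
end

section
/- Let (R,m) be a Noetherian local ring with no nonzero ideal killed by a power of m, let r ∈ m be a non-zerodivisor, and suppose there exists a ∈ R \ (r) with a·m ⊆ r·R. If moreover there exists t₀ ∈ m with a·t₀ = r, then m = (t₀) and R is a regular local ring of dimension 1. -/
/-- If (R,m) is a Noetherian local ring with no nonzero ideal killed by a
power of m, r ∈ m is a non-zerodivisor, a ∉ (r) satisfies a·m ⊆ r·R, and a·t₀ = r for
some t₀ ∈ m, then m = (t₀) and R is regular local of dimension 1. -/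
theorem stmt1 (R : Type) [CommRing R] [IsLocalRing R] [IsNoetherianRing R]
    (hJ : ∀ J : Ideal R, (∃ n : ℕ, (IsLocalRing.maximalIdeal R) ^ n * J = ⊥) → J = ⊥)
    (r : R) (hr : r ∈ IsLocalRing.maximalIdeal R) (hrnzd : r ∈ nonZeroDivisors R)
    (a : R) (ha : a ∉ Ideal.span ({r} : Set R))
    (ham : ∀ x ∈ IsLocalRing.maximalIdeal R, a * x ∈ Ideal.span ({r} : Set R))
    (t₀ : R) (ht₀ : t₀ ∈ IsLocalRing.maximalIdeal R) (hat : a * t₀ = r) :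
    IsLocalRing.maximalIdeal R = Ideal.span ({t₀} : Set R) ∧
    t₀ ∈ nonZeroDivisors R ∧ IsLocalRing.maximalIdeal R ≠ ⊥ := by
  have hanzd : a ∈ nonZeroDivisors R := by
    rw [mem_nonZeroDivisors_iff_right]
    intro z hz
    apply mem_nonZeroDivisors_iff_right.mp hrnzd
    rw [← hat]
    calc z * (a * t₀) = z * a * t₀ := by ring
    _ = 0 := by rw [hz, zero_mul]
  have ht0nzd : t₀ ∈ nonZeroDivisors R := by
    rw [mem_nonZeroDivisors_iff_right]
    intro z hz
    apply mem_nonZeroDivisors_iff_right.mp hrnzd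
    rw [← hat]
    calc z * (a * t₀) = z * t₀ * a := by ring
    _ = 0 := by rw [hz, zero_mul]
  have hmeq : IsLocalRing.maximalIdeal R = Ideal.span ({t₀} : Set R) := by
    apply le_antisymm
    · intro x hx
      obtain ⟨c, hc⟩ := Ideal.mem_span_singleton.mp (ham x hx)
      rw [Ideal.mem_span_singleton]
      refine ⟨c, sub_eq_zero.mp (mem_nonZeroDivisors_iff_right.mp hanzd (x - t₀ * c) ?_)⟩
      rw [← hat] at hc
      calc (x - t₀ * c) * a = a * x - a * t₀ * c := by ring
      _ = 0 := by rw [hc]; ring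
    · rw [Ideal.span_le, Set.singleton_subset_iff]; exact ht₀
  have hr0 : r ≠ 0 := by
    intro h
    apply ha
    rw [h] at hrnzd
    have : a = 0 := mem_nonZeroDivisors_iff_right.mp hrnzd a (by ring)
    rw [this]; exact Ideal.zero_mem _
  exact ⟨hmeq, ht0nzd, fun h => hr0 (by simpa [h] using hr)⟩
end

section
/- Let R be a Noetherian ring, I ⊆ R an ideal, S an R-algebra containing R such that some power of I kills S/R. Let R̂ be the I-adic completion of R and Ŝ := R̂ ⊗_R S. Then the natural map S/R → Ŝ/R̂ is an isomorphism of R-modules, and for every m > 0 the natural map (R : I^m)/I^m → (R̂ : Î^m)/Î^m is an isomorphism. -/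
open TensorProduct

set_option maxHeartbeats 1000000
set_option synthInstance.maxHeartbeats 100000

section AuxLemmas

variable {R : Type} [CommRing R] (I : Ideal R)

/-- If `R` is Noetherian and `x` in the `I`-adic completion of `R` has vanishing `k`-th
component, then `x ∈ I ^ k • ⊤`. -/
lemma auxKerEval [IsNoetherianRing R] (k : ℕ) (x : AdicCompletion I R)
    (hx : AdicCompletion.eval I R k x = 0) :
    x ∈ (I ^ k) • (⊤ : Submodule R (AdicCompletion I R)) := by
  set N := R ⧸ (I ^ k • ⊤ : Submodule R R) with hNdef
  have hbot : (I ^ k • ⊤ : Submodule R N) = ⊥ := by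
    rw [eq_bot_iff]
    refine Submodule.smul_le.mpr ?_
    rintro r hr y -
    obtain ⟨s, rfl⟩ := Submodule.Quotient.mk_surjective _ y
    rw [← Submodule.Quotient.mk_smul, Submodule.mem_bot, Submodule.Quotient.mk_eq_zero]
    exact Submodule.smul_mem_smul hr Submodule.mem_top
  have evalinj : ∀ y : AdicCompletion I N, y.val k = 0 → y = 0 := by
    intro y hy
    apply Subtype.ext
    funext l
    rcases le_or_gt l k with h | h
    · have hp := y.property h
      rw [← hp, hy, map_zero]
      rfl
    · obtain ⟨z, hz⟩ := Submodule.Quotient.mk_surjective _ (y.val l)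
      have h2 := y.property h.le
      rw [← hz, (show AdicCompletion.transitionMap I N h.le (Submodule.Quotient.mk z)
        = Submodule.Quotient.mk z from rfl), hy, Submodule.Quotient.mk_eq_zero, hbot,
        Submodule.mem_bot] at h2
      rw [← hz, h2]
      rfl
  have hfin : Module.Finite R N := Module.Finite.quotient R _
  have hbij := AdicCompletion.ofTensorProduct_bijective_of_finite_of_isNoetherian I N
  have h0 : AdicCompletion.ofTensorProduct I N
      (x ⊗ₜ[R] (Submodule.Quotient.mk (1 : R) : N)) = 0 := by
    apply evalinj
    rw [AdicCompletion.ofTensorProduct_tmul, AdicCompletion.smul_eval]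
    have : x.val k = 0 := hx
    rw [this, zero_smul]
  have htmul : x ⊗ₜ[R] (Submodule.Quotient.mk (1 : R) : N) = 0 := by
    apply hbij.injective
    rw [h0, map_zero]
  have hexact : Function.Exact ((I ^ k • ⊤ : Submodule R R).subtype)
      ((I ^ k • ⊤ : Submodule R R).mkQ) :=
    LinearMap.exact_iff.mpr (by rw [Submodule.ker_mkQ, Submodule.range_subtype])
  have hTexact := lTensor_exact (AdicCompletion I R) hexact (Submodule.mkQ_surjective _)
  have h1 : (LinearMap.lTensor (AdicCompletion I R) (I ^ k • ⊤ : Submodule R R).mkQ)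
      (x ⊗ₜ[R] (1 : R)) = 0 := by
    rw [LinearMap.lTensor_tmul]
    exact htmul
  obtain ⟨z, hz⟩ := (hTexact _).mp h1
  have hle : (I ^ k • ⊤ : Submodule R R) ≤ (I ^ k : Ideal R) := by
    refine Submodule.smul_le.mpr ?_
    intro r hr m _
    rw [smul_eq_mul]
    exact Ideal.mul_mem_right m _ hr
  have key : ∀ z : AdicCompletion I R ⊗[R] (I ^ k • ⊤ : Submodule R R),
      (TensorProduct.rid R (AdicCompletion I R))
        (LinearMap.lTensor (AdicCompletion I R) (I ^ k • ⊤ : Submodule R R).subtype z)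
        ∈ (I ^ k) • (⊤ : Submodule R (AdicCompletion I R)) := by
    intro z
    induction z using TensorProduct.induction_on with
    | zero =>
        rw [LinearMap.map_zero, LinearEquiv.map_zero]
        exact Submodule.zero_mem _
    | tmul a y =>
        rw [LinearMap.lTensor_tmul, Submodule.subtype_apply, TensorProduct.rid_tmul]
        exact Submodule.smul_mem_smul (hle y.2) Submodule.mem_top
    | add z1 z2 h1 h2 =>
        rw [LinearMap.map_add, LinearEquiv.map_add]
        exact Submodule.add_mem _ h1 h2
  have hx2 : (TensorProduct.rid R (AdicCompletion I R)) (x ⊗ₜ[R] (1 : R)) = x := by simp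
  rw [← hx2, ← hz]
  exact key z

/-- The auxiliary linear map `AdicCompletion I R ⊗[R] S →ₗ[R] N` obtained from an `R`-linear
map `π : S →ₗ[R] N` into an `I ^ k`-torsion module `N`, sending `a ⊗ s` to
`(eval_k a) • π s`. -/
lemma auxPhi {S : Type} [CommRing S] [Algebra R S]
    (k : ℕ) {N : Type} [AddCommGroup N] [Module R N]
    (hN : ∀ z ∈ I ^ k, ∀ x : N, z • x = 0) (π : S →ₗ[R] N) :
    ∃ φ : AdicCompletion I R ⊗[R] S →ₗ[R] N,
      (∀ s : S, φ ((1 : AdicCompletion I R) ⊗ₜ[R] s) = π s) ∧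
      (π 1 = 0 → ∀ x : AdicCompletion I R,
        φ (algebraMap (AdicCompletion I R) (AdicCompletion I R ⊗[R] S) x) = 0) := by
  set L1 : R →ₗ[R] S →ₗ[R] N := (LinearMap.lcomp R N π).comp (LinearMap.lsmul R N) with hL1
  have hL1apply : ∀ r : R, ∀ s : S, L1 r s = r • π s := fun r s => rfl
  have hker : (I ^ k • ⊤ : Submodule R R) ≤ LinearMap.ker L1 := by
    intro r hr
    rw [LinearMap.mem_ker]
    apply LinearMap.ext
    intro s
    rw [LinearMap.zero_apply]
    refine Submodule.smul_induction_on hr ?_ ?_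
    · intro z hz m _
      rw [hL1apply, smul_eq_mul, mul_smul]
      exact hN z hz _
    · intro a b ha hb
      rw [map_add, LinearMap.add_apply, ha, hb, add_zero]
  set L2 := Submodule.liftQ (I ^ k • ⊤ : Submodule R R) L1 hker with hL2
  set φ := TensorProduct.lift (L2.comp (AdicCompletion.eval I R k)) with hφ
  have hone : (1 : R ⧸ (I ^ k • ⊤ : Submodule R R)) = Submodule.Quotient.mk 1 := rfl
  refine ⟨φ, ?_, ?_⟩
  · intro s
    rw [hφ, TensorProduct.lift.tmul, LinearMap.comp_apply]
    have heval : AdicCompletion.eval I R k (1 : AdicCompletion I R)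
        = Submodule.Quotient.mk 1 := by
      rw [AdicCompletion.eval_apply, AdicCompletion.val_one, hone]
    rw [heval, hL2, Submodule.liftQ_apply, hL1apply, one_smul]
  · intro hπ x
    have : algebraMap (AdicCompletion I R) (AdicCompletion I R ⊗[R] S) x
        = x ⊗ₜ[R] (1 : S) := by
      rw [Algebra.TensorProduct.algebraMap_apply]
      norm_num
    rw [this, hφ, TensorProduct.lift.tmul, LinearMap.comp_apply]
    obtain ⟨r, hr⟩ := Submodule.Quotient.mk_surjective _ (AdicCompletion.eval I R k x)
    rw [← hr, hL2, Submodule.liftQ_apply, hL1apply, hπ, smul_zero]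

end AuxLemmas

/-- Let R be Noetherian, I ⊆ R an ideal, S ⊇ R an R-algebra with some power
of I killing S/R, R̂ the I-adic completion and Ŝ = R̂ ⊗_R S. Then S/R → Ŝ/R̂ is an
isomorphism, and for every m > 0 the map (R : I^m)/I^m → (R̂ : Î^m)/Î^m is an
isomorphism. (All maps are the natural ones; the iso's are expressed as
surjectivity + injectivity statements.) -/
theorem stmt4 (R S : Type) [CommRing R] [IsNoetherianRing R] [CommRing S] [Algebra R S]
    (hinj : Function.Injective (algebraMap R S))
    (I : Ideal R) (n : ℕ)
    (hkill : ∀ y ∈ I ^ n, ∀ s : S, algebraMap R S y * s ∈ (algebraMap R S).range) :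
    -- S/R → Ŝ/R̂ is bijective:
    (∀ t : AdicCompletion I R ⊗[R] S, ∃ s : S,
        t - (1 : AdicCompletion I R) ⊗ₜ[R] s ∈
          (algebraMap (AdicCompletion I R) (AdicCompletion I R ⊗[R] S)).range) ∧
    (∀ s : S,
        (1 : AdicCompletion I R) ⊗ₜ[R] s ∈
            (algebraMap (AdicCompletion I R) (AdicCompletion I R ⊗[R] S)).range →
        s ∈ (algebraMap R S).range) ∧
    -- for every m > 0, (R : I^m)/I^m → (R̂ : Î^m)/Î^m is bijective:
    (∀ m : ℕ, 0 < m →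
      (∀ t : AdicCompletion I R ⊗[R] S,
        (∀ y ∈ (I.map (algebraMap R (AdicCompletion I R))) ^ m,
            algebraMap (AdicCompletion I R) (AdicCompletion I R ⊗[R] S) y * t ∈
              (algebraMap (AdicCompletion I R) (AdicCompletion I R ⊗[R] S)).range) →
        ∃ s : S,
          (∀ y ∈ I ^ m, algebraMap R S y * s ∈ (algebraMap R S).range) ∧
          t - (1 : AdicCompletion I R) ⊗ₜ[R] s ∈
            Ideal.map (algebraMap (AdicCompletion I R) (AdicCompletion I R ⊗[R] S))
              ((I.map (algebraMap R (AdicCompletion I R))) ^ m)) ∧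
      (∀ s : S,
        (∀ y ∈ I ^ m, algebraMap R S y * s ∈ (algebraMap R S).range) →
        (1 : AdicCompletion I R) ⊗ₜ[R] s ∈
            Ideal.map (algebraMap (AdicCompletion I R) (AdicCompletion I R ⊗[R] S))
              ((I.map (algebraMap R (AdicCompletion I R))) ^ m) →
        s ∈ Ideal.map (algebraMap R S) (I ^ m))) := by
  have gdef : ∀ u : AdicCompletion I R,
      algebraMap (AdicCompletion I R) (AdicCompletion I R ⊗[R] S) u = u ⊗ₜ[R] (1 : S) := by
    intro u
    rw [Algebra.TensorProduct.algebraMap_apply]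
    norm_num
  have evalalg : ∀ k : ℕ, ∀ r : R,
      AdicCompletion.eval I R k (algebraMap R (AdicCompletion I R) r)
        = Submodule.Quotient.mk r := fun k r => rfl
  -- Part 1a: surjectivity of S/R → Ŝ/R̂
  have part1a : ∀ t : AdicCompletion I R ⊗[R] S, ∃ s : S,
      t - (1 : AdicCompletion I R) ⊗ₜ[R] s ∈
        (algebraMap (AdicCompletion I R) (AdicCompletion I R ⊗[R] S)).range := by
    intro t
    induction t using TensorProduct.induction_on with
    | zero =>
        refine ⟨0, ?_⟩
        rw [TensorProduct.tmul_zero, sub_zero]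
        exact zero_mem _
    | tmul x s =>
        obtain ⟨r, hr⟩ := Submodule.Quotient.mk_surjective _ (AdicCompletion.eval I R n x)
        have hd : x - algebraMap R (AdicCompletion I R) r
            ∈ (I ^ n) • (⊤ : Submodule R (AdicCompletion I R)) := by
          apply auxKerEval
          rw [map_sub, evalalg, ← hr, sub_self]
        refine ⟨r • s, ?_⟩
        have heq : x ⊗ₜ[R] s - (1 : AdicCompletion I R) ⊗ₜ[R] (r • s)
            = (x - algebraMap R (AdicCompletion I R) r) ⊗ₜ[R] s := by
          rw [TensorProduct.sub_tmul, Algebra.algebraMap_eq_smul_one,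
            TensorProduct.smul_tmul]
        rw [heq]
        refine Submodule.smul_induction_on hd ?_ ?_
        · intro z hz a _
          obtain ⟨w, hw⟩ := hkill z hz s
          refine ⟨w • a, ?_⟩
          have e : (z • a) ⊗ₜ[R] s = (w • a) ⊗ₜ[R] (1 : S) := by
            rw [TensorProduct.smul_tmul, TensorProduct.smul_tmul, Algebra.smul_def, ← hw,
              Algebra.algebraMap_eq_smul_one]
          rw [gdef, e]
        · intro a b ha hb
          rw [TensorProduct.add_tmul]
          exact add_mem ha hb
    | add t1 t2 h1 h2 =>
        obtain ⟨s1, hs1⟩ := h1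
        obtain ⟨s2, hs2⟩ := h2
        refine ⟨s1 + s2, ?_⟩
        have : t1 + t2 - (1 : AdicCompletion I R) ⊗ₜ[R] (s1 + s2)
            = (t1 - (1 : AdicCompletion I R) ⊗ₜ[R] s1)
              + (t2 - (1 : AdicCompletion I R) ⊗ₜ[R] s2) := by
          rw [TensorProduct.tmul_add]
          ring
        rw [this]
        exact add_mem hs1 hs2
  -- Part 1b: injectivity of S/R → Ŝ/R̂
  have part1b : ∀ s : S,
      (1 : AdicCompletion I R) ⊗ₜ[R] s ∈
          (algebraMap (AdicCompletion I R) (AdicCompletion I R ⊗[R] S)).range →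
      s ∈ (algebraMap R S).range := by
    set Rsub := LinearMap.range (Algebra.linearMap R S) with hRsub
    have hN : ∀ z ∈ I ^ n, ∀ x : S ⧸ Rsub, z • x = 0 := by
      intro z hz x
      obtain ⟨u, rfl⟩ := Submodule.Quotient.mk_surjective _ x
      rw [← Submodule.Quotient.mk_smul, Submodule.Quotient.mk_eq_zero]
      obtain ⟨w, hw⟩ := hkill z hz u
      rw [LinearMap.mem_range]
      exact ⟨w, by rw [Algebra.linearMap_apply, hw, ← Algebra.smul_def]⟩
    obtain ⟨φ, hφ1, hφ2⟩ := auxPhi I n hN Rsub.mkQ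
    intro s hs
    obtain ⟨x, hx⟩ := hs
    have h1 : Rsub.mkQ 1 = 0 := by
      rw [Submodule.mkQ_apply, Submodule.Quotient.mk_eq_zero]
      exact ⟨1, by rw [Algebra.linearMap_apply, map_one]⟩
    have hz : Rsub.mkQ s = 0 := by
      rw [← hφ1 s, ← hx]
      exact hφ2 h1 x
    rw [Submodule.mkQ_apply, Submodule.Quotient.mk_eq_zero] at hz
    obtain ⟨r, hr⟩ := hz
    exact ⟨r, hr⟩
  refine ⟨part1a, part1b, ?_⟩
  intro m _
  constructor
  · -- Part 2a
    intro t ht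
    obtain ⟨s0, hs0⟩ := part1a t
    obtain ⟨x, hx⟩ := hs0
    obtain ⟨r, hr⟩ := Submodule.Quotient.mk_surjective _ (AdicCompletion.eval I R m x)
    set d := x - algebraMap R (AdicCompletion I R) r with hddef
    have hd : d ∈ (I ^ m) • (⊤ : Submodule R (AdicCompletion I R)) := by
      apply auxKerEval
      rw [hddef, map_sub, evalalg, ← hr, sub_self]
    have hdI : d ∈ (I.map (algebraMap R (AdicCompletion I R))) ^ m := by
      rw [Ideal.smul_top_eq_map] at hd
      rw [← Ideal.map_pow]
      exact hd
    have hts : t - (1 : AdicCompletion I R) ⊗ₜ[R] (s0 + algebraMap R S r)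
        = algebraMap (AdicCompletion I R) (AdicCompletion I R ⊗[R] S) d := by
      rw [TensorProduct.tmul_add, hddef, map_sub, hx,
        ← Algebra.TensorProduct.algebraMap_apply',
        IsScalarTower.algebraMap_apply R (AdicCompletion I R)
          (AdicCompletion I R ⊗[R] S)]
      ring
    have hts2 : (1 : AdicCompletion I R) ⊗ₜ[R] (s0 + algebraMap R S r)
        = t - algebraMap (AdicCompletion I R) (AdicCompletion I R ⊗[R] S) d := by
      rw [← hts]
      ring
    refine ⟨s0 + algebraMap R S r, ?_, ?_⟩
    · intro y hy
      have hamem : algebraMap R (AdicCompletion I R) y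
          ∈ (I.map (algebraMap R (AdicCompletion I R))) ^ m := by
        rw [← Ideal.map_pow]
        exact Ideal.mem_map_of_mem _ hy
      have e1 : (1 : AdicCompletion I R) ⊗ₜ[R] (algebraMap R S y * (s0 + algebraMap R S r))
          = ((1 : AdicCompletion I R) ⊗ₜ[R] algebraMap R S y)
            * ((1 : AdicCompletion I R) ⊗ₜ[R] (s0 + algebraMap R S r)) := by
        rw [Algebra.TensorProduct.tmul_mul_tmul, one_mul]
      have e0 : (1 : AdicCompletion I R) ⊗ₜ[R] (algebraMap R S y)
          = algebraMap (AdicCompletion I R) (AdicCompletion I R ⊗[R] S)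
              (algebraMap R (AdicCompletion I R) y) := by
        rw [← Algebra.TensorProduct.algebraMap_apply',
          IsScalarTower.algebraMap_apply R (AdicCompletion I R)
            (AdicCompletion I R ⊗[R] S)]
      have key : (1 : AdicCompletion I R) ⊗ₜ[R]
          (algebraMap R S y * (s0 + algebraMap R S r)) ∈
          (algebraMap (AdicCompletion I R) (AdicCompletion I R ⊗[R] S)).range := by
        rw [e1, e0, hts2, mul_sub, ← map_mul]
        exact sub_mem (ht _ hamem) ⟨algebraMap R (AdicCompletion I R) y * d, rfl⟩
      exact part1b _ key
    · rw [hts]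
      exact Ideal.mem_map_of_mem _ hdI
  · -- Part 2b
    intro s _ hmem
    set J := Ideal.map (algebraMap R S) (I ^ m) with hJ
    have hN : ∀ z ∈ I ^ m, ∀ x : S ⧸ (J.restrictScalars R), z • x = 0 := by
      intro z hz x
      obtain ⟨u, rfl⟩ := Submodule.Quotient.mk_surjective _ x
      rw [← Submodule.Quotient.mk_smul, Submodule.Quotient.mk_eq_zero]
      show z • u ∈ J
      rw [Algebra.smul_def]
      exact Ideal.mul_mem_right u _ (Ideal.mem_map_of_mem _ hz)
    obtain ⟨φ, hφ1, _⟩ := auxPhi I m hN (J.restrictScalars R).mkQ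
    rw [← Ideal.map_pow, Ideal.map_map, ← IsScalarTower.algebraMap_eq] at hmem
    have hmem2 : (1 : AdicCompletion I R) ⊗ₜ[R] s
        ∈ (I ^ m) • (⊤ : Submodule R (AdicCompletion I R ⊗[R] S)) := by
      rw [Ideal.smul_top_eq_map]
      exact hmem
    have h0 : φ ((1 : AdicCompletion I R) ⊗ₜ[R] s) = 0 := by
      refine Submodule.smul_induction_on hmem2 ?_ ?_
      · intro z hz v _
        rw [LinearMap.map_smul]
        exact hN z hz _
      · intro a b ha hb
        rw [map_add, ha, hb, add_zero]
    rw [hφ1, Submodule.mkQ_apply, Submodule.Quotient.mk_eq_zero] at h0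
    exact h0
end

section
/- Let k be a field of characteristic p > 0, A a finite semisimple (i.e., reduced finite) k-algebra, and a₁, a₂ ∈ A. Then a₁ ⊗ 1 − 1 ⊗ a₂ is nilpotent in A ⊗_k A if and only if there exists m ≥ 0 such that a₁^{p^m} = a₂^{p^m} and this common value lies in (the image of) k. -/
open TensorProduct

lemma stmt8_aux (k : Type) [Field k] (A : Type) [CommRing A] [Algebra k A]
    (a : A) (h : (a ⊗ₜ[k] (1 : A)) = (1 : A) ⊗ₜ[k] a) :
    a ∈ (algebraMap k A).range := by
  rcases subsingleton_or_nontrivial A with hA | hA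
  · exact ⟨0, Subsingleton.elim _ _⟩
  · have key : ∀ φ ψ : Module.Dual k A, φ a * ψ 1 = φ 1 * ψ a := by
      intro φ ψ
      have := congrArg ((TensorProduct.lid k k).toLinearMap ∘ₗ TensorProduct.map φ ψ) h
      simpa using this
    have h1 : ∀ ψ : Module.Dual k A, ψ 1 • a - ψ a • (1 : A) = 0 := by
      intro ψ
      rw [← Module.forall_dual_apply_eq_zero_iff k]
      intro φ
      have hk := key φ ψ
      simp only [map_sub, map_smul, smul_eq_mul]
      linear_combination hk
    have h2 : ∃ ψ : Module.Dual k A, ψ (1 : A) ≠ 0 := by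
      by_contra hcon
      push_neg at hcon
      have : (1 : A) = 0 := (Module.forall_dual_apply_eq_zero_iff k (1 : A)).mp hcon
      exact one_ne_zero this
    obtain ⟨ψ, hψ⟩ := h2
    refine ⟨(ψ 1)⁻¹ * ψ a, ?_⟩
    have := sub_eq_zero.mp (h1 ψ)
    rw [Algebra.algebraMap_eq_smul_one, mul_smul]
    rw [← this, ← mul_smul, inv_mul_cancel₀ hψ, one_smul]

/-- k a field of characteristic p > 0, A a finite reduced (semisimple)
k-algebra, a₁ a₂ ∈ A. Then a₁ ⊗ 1 − 1 ⊗ a₂ is nilpotent in A ⊗_k A iff a₁^{p^m} = a₂^{p^m}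
for some m, the common value lying in (the image of) k. -/
theorem stmt8 (k : Type) [Field k] (p : ℕ) (hp : p.Prime) [CharP k p]
    (A : Type) [CommRing A] [Algebra k A] [Module.Finite k A] [IsReduced A]
    (a₁ a₂ : A) :
    IsNilpotent ((a₁ ⊗ₜ[k] (1 : A) - (1 : A) ⊗ₜ[k] a₂) : A ⊗[k] A) ↔
      ∃ m : ℕ, a₁ ^ p ^ m = a₂ ^ p ^ m ∧ a₁ ^ p ^ m ∈ (algebraMap k A).range := by
  haveI : Fact p.Prime := ⟨hp⟩
  rcases subsingleton_or_nontrivial A with hA | hA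
  · constructor
    · intro _
      exact ⟨0, Subsingleton.elim _ _, ⟨0, Subsingleton.elim _ _⟩⟩
    · intro _
      exact ⟨0, Subsingleton.elim _ _⟩
  · haveI : Nontrivial (A ⊗[k] A) := inferInstance
    haveI : CharP (A ⊗[k] A) p :=
      charP_of_injective_algebraMap' (A := A ⊗[k] A) k p
    constructor
    · rintro ⟨n, hn⟩
      obtain ⟨m, hm⟩ := pow_unbounded_of_one_lt (y := p) n hp.one_lt
      have hnil : (a₁ ⊗ₜ[k] (1 : A) - (1 : A) ⊗ₜ[k] a₂) ^ p ^ m = 0 :=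
        pow_eq_zero_of_le hm.le hn
      rw [sub_pow_char_pow, Algebra.TensorProduct.tmul_pow, Algebra.TensorProduct.tmul_pow,
        one_pow, sub_eq_zero] at hnil
      have heq : a₁ ^ p ^ m = a₂ ^ p ^ m := by
        have := congrArg (LinearMap.mul' k A) hnil
        simpa using this
      refine ⟨m, heq, stmt8_aux k A _ ?_⟩
      rw [heq] at hnil ⊢
      exact hnil
    · rintro ⟨m, heq, x, hx⟩
      refine ⟨p ^ m, ?_⟩
      rw [sub_pow_char_pow, Algebra.TensorProduct.tmul_pow, Algebra.TensorProduct.tmul_pow,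
        one_pow, ← hx, ← heq, ← hx, sub_eq_zero]
      rw [Algebra.algebraMap_eq_smul_one]
      rw [smul_tmul]
end

section
/- Let X be a Noetherian scheme and W ⊆ X a closed subscheme containing no associated point of X, and suppose W is contained in an effective Cartier divisor (g = 0). Then there are only finitely many points x ∈ W such that the local pair (x, X_x) is not normal; namely, every such x is either a generic point of (g=0) or an associated point of the subscheme (g = 0). -/
/-! Auxiliary lemmas -/

section AssFinite

variable {R M : Type*} [CommRing R] [IsNoetherianRing R] [AddCommGroup M] [Module R M]

theorem assQuotFinite [IsNoetherian R M] (N : Submodule R M) :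
    (associatedPrimes R (M ⧸ N)).Finite := by
  refine IsNoetherian.induction
    (P := fun N : Submodule R M => (associatedPrimes R (M ⧸ N)).Finite) (fun N IH => ?_) N
  show (associatedPrimes R (M ⧸ N)).Finite
  by_cases hne : (associatedPrimes R (M ⧸ N)).Nonempty
  swap
  · rw [Set.not_nonempty_iff_eq_empty] at hne; rw [hne]; exact Set.finite_empty
  obtain ⟨p0, hp0⟩ := hne
  obtain ⟨hp0prime, x, hx⟩ := isAssociatedPrime_iff.mp hp0
  obtain ⟨y, rfl⟩ := Submodule.Quotient.mk_surjective N x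
  have hy : y ∉ N := by
    intro hy
    apply hp0prime.ne_top
    rw [hx, (Submodule.Quotient.mk_eq_zero N).mpr hy, Ideal.eq_top_iff_one,
      Submodule.mem_colon_singleton, smul_zero]
    exact Submodule.zero_mem _
  set N' := N ⊔ (R ∙ y) with hN'def
  have hyN' : y ∈ N' := Submodule.mem_sup_right (Submodule.mem_span_singleton_self y)
  have hNN' : N ≤ N' := le_sup_left
  have hlt : N < N' := lt_of_le_of_ne hNN' (by intro e; rw [← e] at hyN'; exact hy hyN')
  have hNN'' : N ≤ N'.comap LinearMap.id := hNN'
  set f : (M ⧸ N) →ₗ[R] (M ⧸ N') := Submodule.mapQ N N' LinearMap.id hNN'' with hfdef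
  have hf : ∀ z : M, f (Submodule.Quotient.mk z) = Submodule.Quotient.mk z := fun z => by
    simp [hfdef, Submodule.mapQ_apply]
  refine Set.Finite.subset (Set.Finite.insert p0 (IH N' hlt)) ?_
  rintro q hq
  obtain ⟨hqprime, z, hz⟩ := isAssociatedPrime_iff.mp hq
  obtain ⟨w, rfl⟩ := Submodule.Quotient.mk_surjective N z
  have hmemq : ∀ a : R, a ∈ q ↔ a • (Submodule.Quotient.mk w : M ⧸ N) = 0 := by
    intro a; rw [hz, Submodule.mem_colon_singleton, Submodule.mem_bot]
  have hmemp : ∀ a : R, a ∈ p0 ↔ a • (Submodule.Quotient.mk y : M ⧸ N) = 0 := by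
    intro a; rw [hx, Submodule.mem_colon_singleton, Submodule.mem_bot]
  by_cases hcase : ∃ r : R,
      r • (Submodule.Quotient.mk w : M ⧸ N) ≠ 0 ∧ f (r • Submodule.Quotient.mk w) = 0
  · -- q = p0
    left
    obtain ⟨r, hr0, hrf⟩ := hcase
    have hrw : (r • w) ∈ N' := by
      rw [← Submodule.Quotient.mk_eq_zero N']
      rw [← Submodule.Quotient.mk_smul, hf] at hrf
      exact hrf
    obtain ⟨u, hu, v, hv, huv⟩ := Submodule.mem_sup.mp hrw
    obtain ⟨c, rfl⟩ := Submodule.mem_span_singleton.mp hv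
    have hz0 : r • (Submodule.Quotient.mk w : M ⧸ N) = c • (Submodule.Quotient.mk y) := by
      rw [← Submodule.Quotient.mk_smul, ← huv, Submodule.Quotient.mk_add,
        (Submodule.Quotient.mk_eq_zero N).mpr hu, zero_add, Submodule.Quotient.mk_smul]
    have hrq : r ∉ q := fun hr => hr0 ((hmemq r).mp hr)
    have hcp : c ∉ p0 := fun hc => hr0 (by rw [hz0]; exact (hmemp c).mp hc)
    have : q = p0 := by
      ext a
      constructor
      · intro ha
        have ha' := (hmemq a).mp ha
        have h1 : (a * c) • (Submodule.Quotient.mk y : M ⧸ N) = 0 := by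
          rw [mul_smul, ← hz0, smul_comm, ha', smul_zero]
        rcases hp0prime.mem_or_mem ((hmemp (a * c)).mpr h1) with h | h
        · exact h
        · exact absurd h hcp
      · intro ha
        have ha' := (hmemp a).mp ha
        have h1 : (a * r) • (Submodule.Quotient.mk w : M ⧸ N) = 0 := by
          rw [mul_smul, hz0, smul_comm, ha', smul_zero]
        rcases hqprime.mem_or_mem ((hmemq (a * r)).mpr h1) with h | h
        · exact h
        · exact absurd h hrq
    exact this
  · right
    push_neg at hcase
    refine isAssociatedPrime_iff.mpr ⟨hqprime, Submodule.Quotient.mk w, ?_⟩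
    ext a
    rw [Submodule.mem_colon_singleton, Submodule.mem_bot]
    constructor
    · intro ha
      have ha' := (hmemq a).mp ha
      have : f (a • Submodule.Quotient.mk w) = a • (Submodule.Quotient.mk w : M ⧸ N') := by
        rw [map_smul, hf]
      rw [← this, ha', map_zero]
    · intro ha
      rw [hmemq a]
      by_contra hne0
      apply hcase a hne0
      rw [map_smul, hf]
      exact ha

theorem assFinite [IsNoetherian R M] : (associatedPrimes R M).Finite := by
  have e : (M ⧸ (⊥ : Submodule R M)) ≃ₗ[R] M := Submodule.quotEquivOfEqBot ⊥ rfl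
  rw [← LinearEquiv.AssociatedPrimes.eq e]
  exact assQuotFinite ⊥

end AssFinite

/-- A Noetherian-style notion: the local pair (m, Spec R) is normal, i.e. every finite
modification centered at the closed point (a finite ring map whose kernel and cokernel
are killed by a power of m and such that m is not an associated prime of the target)
is an isomorphism. -/
def IsNormalPairLocal (R : Type) [CommRing R] [IsLocalRing R] : Prop :=
  ∀ (S : Type) (_ : CommRing S) (φ : R →+* S),
    (letI := φ.toAlgebra; Module.Finite R S) →
    (∃ n : ℕ,
      (∀ x ∈ RingHom.ker φ, ∀ y ∈ (IsLocalRing.maximalIdeal R) ^ n, y * x = 0) ∧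
      (∀ s : S, ∀ y ∈ (IsLocalRing.maximalIdeal R) ^ n, φ y * s ∈ φ.range)) →
    (letI := φ.toAlgebra; IsLocalRing.maximalIdeal R ∉ associatedPrimes R S) →
    Function.Bijective φ

section Key

/-- Key lemma: a local ring with a nonzerodivisor `h` in the maximal ideal such that the
maximal ideal is not an associated prime of `A ⧸ (h)` is a normal pair. -/
theorem key_normal {A : Type} [CommRing A] [IsLocalRing A] (h : A)
    (hnzd : h ∈ nonZeroDivisors A) (hm : h ∈ IsLocalRing.maximalIdeal A)
    (hass : IsLocalRing.maximalIdeal A ∉ associatedPrimes A (A ⧸ Ideal.span ({h} : Set A))) :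
    IsNormalPairLocal A := by
  intro S _ φ _ hex hassS
  obtain ⟨n, h1, h2⟩ := hex
  letI := φ.toAlgebra
  have hsmul : ∀ (a : A) (s : S), a • s = φ a * s := fun a s => rfl
  have hφinj : Function.Injective φ := by
    rw [injective_iff_map_eq_zero]
    intro x hx
    have hx' : x ∈ RingHom.ker φ := by rwa [RingHom.mem_ker]
    have h0 : h ^ n * x = 0 := h1 x hx' (h ^ n) (Ideal.pow_mem_pow hm n)
    exact (mem_nonZeroDivisors_iff_right.mp (pow_mem hnzd n)) x (by rwa [mul_comm])
  refine ⟨hφinj, ?_⟩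
  -- surjectivity
  by_contra hns
  classical
  set m := IsLocalRing.maximalIdeal A with hmdef
  have hPex : ∃ k : ℕ, ∀ s : S, ∀ y ∈ m ^ k, φ y * s ∈ φ.range := ⟨n, h2⟩
  set k := Nat.find hPex with hkdef
  have hPk : ∀ s : S, ∀ y ∈ m ^ k, φ y * s ∈ φ.range := Nat.find_spec hPex
  have hk0 : k ≠ 0 := by
    intro h0
    apply hns
    intro s
    have := hPk s 1 (by rw [h0, pow_zero, Ideal.one_eq_top]; exact Submodule.mem_top)
    simpa using this
  have hmin : ¬ ∀ s : S, ∀ y ∈ m ^ (k - 1), φ y * s ∈ φ.range :=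
    Nat.find_min hPex (by omega)
  push_neg at hmin
  obtain ⟨s0, y0, hy0, hy0r⟩ := hmin
  set s : S := φ y0 * s0 with hsdef
  have hs : s ∉ φ.range := hy0r
  have hms : ∀ y ∈ m, φ y * s ∈ φ.range := by
    intro y hy
    have hk1 : (k - 1) + 1 = k := by omega
    have hyy0 : y0 * y ∈ m ^ k := by
      have : y0 * y ∈ m ^ (k - 1) * m := Ideal.mul_mem_mul hy0 hy
      rwa [← pow_succ, hk1] at this
    have : φ (y0 * y) * s0 ∈ φ.range := hPk s0 (y0 * y) hyy0
    rwa [map_mul, show φ y0 * φ y * s0 = φ y * (φ y0 * s0) by ring] at this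
  obtain ⟨x, hx⟩ := hms h hm
  -- x ∈ span {h}
  have hxmem : x ∈ Ideal.span ({h} : Set A) := by
    by_contra hxn
    apply hass
    refine ⟨(IsLocalRing.maximalIdeal.isMaximal A).isPrime,
      Ideal.Quotient.mk (Ideal.span ({h} : Set A)) x, ?_⟩
    suffices hsuff : m = (⊥ : Submodule A (A ⧸ Ideal.span ({h} : Set A))).colon
        {Ideal.Quotient.mk (Ideal.span ({h} : Set A)) x} by
      rw [← hsuff]; exact (IsLocalRing.maximalIdeal.isMaximal A).isPrime.radical.symm
    have hsm : ∀ a : A, a • (Ideal.Quotient.mk (Ideal.span ({h} : Set A)) x) =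
        Ideal.Quotient.mk (Ideal.span ({h} : Set A)) (a * x) := fun a => rfl
    apply le_antisymm
    · intro y hy
      rw [Submodule.mem_colon_singleton, Submodule.mem_bot, hsm, Ideal.Quotient.eq_zero_iff_mem]
      obtain ⟨c, hc⟩ := hms y hy
      have heq : φ (h * c) = φ (y * x) := by
        rw [map_mul, map_mul, hc, hx]; ring
      have heq' := hφinj heq
      rw [← heq']
      exact Ideal.mem_span_singleton.mpr (Dvd.intro c rfl)
    · apply IsLocalRing.le_maximalIdeal
      intro htop
      rw [Ideal.eq_top_iff_one, Submodule.mem_colon_singleton, Submodule.mem_bot, one_smul,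
        Ideal.Quotient.eq_zero_iff_mem] at htop
      exact hxn htop
  obtain ⟨a, ha⟩ := Ideal.mem_span_singleton'.mp hxmem
  -- ha : a * h = x
  set s' : S := s - φ a with hs'def
  have hs'0 : s' ≠ 0 := by
    intro h0
    apply hs
    rw [hs'def, sub_eq_zero] at h0
    exact ⟨a, h0.symm⟩
  have hhs' : φ h * s' = 0 := by
    rw [hs'def, mul_sub, ← hx, ← ha, map_mul]
    ring
  have hys' : ∀ y ∈ m, φ y * s' = 0 := by
    intro y hy
    obtain ⟨c, hc⟩ := hms y hy
    have hrepr : φ y * s' = φ (c - y * a) := by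
      rw [hs'def, mul_sub, ← hc, map_sub, map_mul]
    have h0 : φ (h * (c - y * a)) = 0 := by
      rw [map_mul, ← hrepr, show φ h * (φ y * s') = φ y * (φ h * s') by ring, hhs', mul_zero]
    have h0' : h * (c - y * a) = 0 := hφinj (by rw [h0, map_zero])
    have h0'' : c - y * a = 0 := (mem_nonZeroDivisors_iff_right.mp hnzd) _ (by rwa [mul_comm])
    rw [hrepr, h0'', map_zero]
  apply hassS
  refine ⟨(IsLocalRing.maximalIdeal.isMaximal A).isPrime, s', ?_⟩
  suffices hsuff : m = (⊥ : Submodule A S).colon {s'} by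
    rw [← hsuff]; exact (IsLocalRing.maximalIdeal.isMaximal A).isPrime.radical.symm
  apply le_antisymm
  · intro y hy
    rw [Submodule.mem_colon_singleton, Submodule.mem_bot, hsmul]
    exact hys' y hy
  · apply IsLocalRing.le_maximalIdeal
    intro htop
    rw [Ideal.eq_top_iff_one, Submodule.mem_colon_singleton, Submodule.mem_bot, one_smul] at htop
    exact hs'0 htop

end Key

section Transfer

theorem transfer {R : Type} [CommRing R] [IsNoetherianRing R] (g : R) (p : Ideal R) [p.IsPrime]
    (H : IsLocalRing.maximalIdeal (Localization.AtPrime p) ∈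
      associatedPrimes (Localization.AtPrime p)
        (Localization.AtPrime p ⧸
          Ideal.span ({algebraMap R (Localization.AtPrime p) g} : Set (Localization.AtPrime p)))) :
    p ∈ associatedPrimes R (R ⧸ Ideal.span ({g} : Set R)) := by
  classical
  set A := Localization.AtPrime p with hAdef
  set f := algebraMap R A with hfdef
  set I : Ideal A := Ideal.span ({f g} : Set A) with hIdef
  haveI : IsNoetherianRing A := IsLocalization.isNoetherianRing p.primeCompl A inferInstance
  obtain ⟨-, sb, hann⟩ := isAssociatedPrime_iff.mp H
  obtain ⟨s, rfl⟩ := Ideal.Quotient.mk_surjective sb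
  obtain ⟨⟨a, t⟩, hst⟩ := IsLocalization.surj p.primeCompl s
  -- hst : s * f t = f a
  have hsm : ∀ z w : A, z • (Ideal.Quotient.mk I w) = Ideal.Quotient.mk I (z * w) :=
    fun z w => rfl
  have hann' : ∀ z : A, z ∈ IsLocalRing.maximalIdeal A ↔ Ideal.Quotient.mk I (z * s) = 0 := by
    intro z
    rw [hann, Submodule.mem_colon_singleton, Submodule.mem_bot, hsm]
  have htu : IsUnit (f (t : R)) := IsLocalization.map_units A t
  have htm : f (t : R) ∉ IsLocalRing.maximalIdeal A := fun hmem =>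
    (mem_nonunits_iff.mp ((IsLocalRing.mem_maximalIdeal _).mp hmem)) htu
  have hannu : ∀ z : A, Ideal.Quotient.mk I (z * f a) = 0 ↔ z ∈ IsLocalRing.maximalIdeal A := by
    intro z
    constructor
    · intro hz
      have h1 : Ideal.Quotient.mk I ((z * f (t : R)) * s) = 0 := by
        rw [show (z * f (t : R)) * s = z * (s * f (t : R)) by ring, hst]
        exact hz
      have h2 : z * f (t : R) ∈ IsLocalRing.maximalIdeal A := (hann' _).mpr h1
      rcases ((IsLocalRing.maximalIdeal.isMaximal A).isPrime.mem_or_mem h2) with hmem | hmem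
      · exact hmem
      · exact absurd hmem htm
    · intro hz
      have h1 : Ideal.Quotient.mk I (z * s) = 0 := (hann' z).mp hz
      rw [show z * f a = f (t : R) * (z * s) by rw [← hst]; ring, map_mul, h1, mul_zero]
  -- generators of p
  obtain ⟨G, hG⟩ := IsNoetherian.noetherian p
  have hkey : ∀ y : R, y ∈ p → ∃ u : p.primeCompl, ∃ d : R, y * ((u : R) * a) = g * d := by
    intro y hy
    have h1 : f y ∈ IsLocalRing.maximalIdeal A :=
      (IsLocalization.AtPrime.to_map_mem_maximal_iff A p y).mpr hy
    have h2 : Ideal.Quotient.mk I (f y * f a) = 0 := (hannu (f y)).mpr h1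
    rw [Ideal.Quotient.eq_zero_iff_mem, ← map_mul] at h2
    obtain ⟨z, hzz⟩ := Ideal.mem_span_singleton'.mp h2
    -- hzz : z * f g = f (y * a)
    obtain ⟨⟨b, t1⟩, hb⟩ := IsLocalization.surj p.primeCompl z
    -- hb : z * f t1 = f b
    have h3 : f (g * b) = f (y * a * (t1 : R)) := by
      rw [map_mul, map_mul, ← hb, ← hzz]
      ring
    obtain ⟨c, hc⟩ := (IsLocalization.eq_iff_exists p.primeCompl A).mp h3
    refine ⟨c * t1, (c : R) * b, ?_⟩
    push_cast
    linear_combination -hc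
  choose u d hud using hkey
  have hyp : ∀ y : {x // x ∈ G}, (y : R) ∈ p := fun y => hG ▸ Submodule.subset_span y.2
  set τ : R := ∏ y ∈ G.attach, ((u (y : R) (hyp y) : R)) with hτdef
  have hτ : τ ∈ p.primeCompl := Submonoid.prod_mem _ (fun y _ => (u (y : R) (hyp y)).2)
  set b : R := τ * a with hbdef
  refine isAssociatedPrime_iff.mpr ⟨‹p.IsPrime›, Ideal.Quotient.mk (Ideal.span ({g} : Set R)) b, ?_⟩
  have hsm2 : ∀ z w : R, z • (Ideal.Quotient.mk (Ideal.span ({g} : Set R)) w) =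
      Ideal.Quotient.mk (Ideal.span ({g} : Set R)) (z * w) := fun z w => rfl
  apply le_antisymm
  · rw [← hG]
    apply Submodule.span_le.mpr
    intro y hyG
    rw [SetLike.mem_coe, Submodule.mem_colon_singleton, Submodule.mem_bot, hsm2,
      Ideal.Quotient.eq_zero_iff_mem]
    have hdvd : ((u y (hyp ⟨y, hyG⟩) : R)) ∣ τ := by
      rw [hτdef]
      exact Finset.dvd_prod_of_mem _ (Finset.mem_attach G ⟨y, hyG⟩)
    obtain ⟨e, he⟩ := hdvd
    have := hud y (hyp ⟨y, hyG⟩)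
    rw [Ideal.mem_span_singleton']
    refine ⟨e * d y (hyp ⟨y, hyG⟩), ?_⟩
    calc e * d y (hyp ⟨y, hyG⟩) * g = e * (y * ((u y (hyp ⟨y, hyG⟩) : R) * a)) := by
          rw [this]; ring
      _ = y * b := by rw [hbdef, he]; ring
  · intro c hc
    rw [Submodule.mem_colon_singleton, Submodule.mem_bot, hsm2, Ideal.Quotient.eq_zero_iff_mem,
      Ideal.mem_span_singleton'] at hc
    obtain ⟨r, hr⟩ := hc
    -- hr : r * g = c * b
    have h1 : Ideal.Quotient.mk I (f (c * τ) * f a) = 0 := by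
      rw [← map_mul, Ideal.Quotient.eq_zero_iff_mem]
      have : f (c * τ * a) = f g * f r := by
        rw [← map_mul]
        congr 1
        rw [hbdef] at hr
        linear_combination -hr
      rw [this]
      exact Ideal.mul_mem_right _ _ (Ideal.subset_span rfl)
    have h2 : f (c * τ) ∈ IsLocalRing.maximalIdeal A := (hannu _).mp h1
    have h3 : c * τ ∈ p := (IsLocalization.AtPrime.to_map_mem_maximal_iff A p _).mp h2
    rcases ‹p.IsPrime›.mem_or_mem h3 with hmem | hmem
    · exact hmem
    · exact absurd hmem hτ

end Transfer

/-- Let R be Noetherian, W a closed set of primes containing no associated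
prime of R and contained in the Cartier divisor (g = 0), g a non-zerodivisor. Then only
finitely many p ∈ W have non-normal local pair (p, R_p), and every such p is a generic
point of (g=0) (a minimal prime over (g)) or an associated point of (g=0). -/
theorem stmt10 (R : Type) [CommRing R] [IsNoetherianRing R]
    (g : R) (hg : g ∈ nonZeroDivisors R)
    (W : Set (PrimeSpectrum R)) (hWc : IsClosed W)
    (hWg : W ⊆ PrimeSpectrum.zeroLocus ({g} : Set R))
    (hWass : ∀ p ∈ W, PrimeSpectrum.asIdeal p ∉ associatedPrimes R R) :
    {p : PrimeSpectrum R | p ∈ W ∧ ¬ IsNormalPairLocal (Localization.AtPrime p.asIdeal)}.Finite ∧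
    ∀ p ∈ W, ¬ IsNormalPairLocal (Localization.AtPrime p.asIdeal) →
      (p.asIdeal ∈ (Ideal.span ({g} : Set R)).minimalPrimes ∨
        p.asIdeal ∈ associatedPrimes R (R ⧸ Ideal.span ({g} : Set R))) := by
  have hnzdloc : ∀ p : PrimeSpectrum R,
      algebraMap R (Localization.AtPrime p.asIdeal) g ∈
        nonZeroDivisors (Localization.AtPrime p.asIdeal) := by
    intro p
    rw [mem_nonZeroDivisors_iff_right]
    intro z hz
    obtain ⟨⟨a, t⟩, hst⟩ := IsLocalization.surj p.asIdeal.primeCompl z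
    have h1 : algebraMap R (Localization.AtPrime p.asIdeal) (g * a) = 0 := by
      calc algebraMap R (Localization.AtPrime p.asIdeal) (g * a)
          = (z * algebraMap R (Localization.AtPrime p.asIdeal) g) *
              algebraMap R (Localization.AtPrime p.asIdeal) (t : R) := by
            rw [map_mul, ← hst]; ring
        _ = 0 := by rw [hz, zero_mul]
    obtain ⟨c, hc⟩ := (IsLocalization.map_eq_zero_iff p.asIdeal.primeCompl _ _).mp h1
    have hca : (c : R) * a = 0 := (mem_nonZeroDivisors_iff_right.mp hg) _ (by linear_combination hc)
    have h2 : algebraMap R (Localization.AtPrime p.asIdeal) a = 0 :=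
      (IsLocalization.map_eq_zero_iff p.asIdeal.primeCompl _ _).mpr ⟨c, hca⟩
    have h3 : z * algebraMap R (Localization.AtPrime p.asIdeal) (t : R) = 0 := by
      rw [hst, h2]
    have htu : IsUnit (algebraMap R (Localization.AtPrime p.asIdeal) (t : R)) :=
      IsLocalization.map_units _ t
    obtain ⟨v, hv⟩ := htu
    calc z = z * ((v : Localization.AtPrime p.asIdeal) * (v⁻¹ : _)) := by
          rw [Units.mul_inv, mul_one]
      _ = (z * (v : Localization.AtPrime p.asIdeal)) * (v⁻¹ : _) := by ring
      _ = 0 := by rw [hv, h3, zero_mul]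
  have main : ∀ p ∈ W, ¬ IsNormalPairLocal (Localization.AtPrime p.asIdeal) →
      p.asIdeal ∈ associatedPrimes R (R ⧸ Ideal.span ({g} : Set R)) := by
    intro p hp hnn
    by_contra hnass
    apply hnn
    have hgp : g ∈ p.asIdeal := by
      have := hWg hp
      rw [PrimeSpectrum.mem_zeroLocus, Set.singleton_subset_iff] at this
      exact this
    refine key_normal (algebraMap R (Localization.AtPrime p.asIdeal) g) (hnzdloc p)
      ((IsLocalization.AtPrime.to_map_mem_maximal_iff _ p.asIdeal g).mpr hgp) ?_
    intro H
    exact hnass (transfer g p.asIdeal H)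
  constructor
  · have hfin : (associatedPrimes R (R ⧸ Ideal.span ({g} : Set R))).Finite := assFinite
    have hinj : Function.Injective (PrimeSpectrum.asIdeal (R := R)) := @PrimeSpectrum.ext _ _
    refine Set.Finite.subset (hfin.preimage hinj.injOn) ?_
    rintro p ⟨hpW, hnn⟩
    exact main p hpW hnn
  · exact fun p hp hnn => Or.inr (main p hp hnn)
end

section
/- Let g : Y → X be a finite modification of Noetherian affine schemes centered at a closed subscheme W containing no associated point of X. Then there exists a non-zerodivisor φ ∈ O(X) with φ·O(Y) ⊆ O(X) (viewing O(X) ⊆ O(Y) ⊆ sections over X\W); consequently, if the punctual normalization of X at a point x is a finite O(X)-module then the punctual normalization of Y at the point over x is a finite module as well. -/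
variable {R : Type*} [CommRing R]

/-- An associated prime of `M` is an associated prime of a submodule `N` or of `M ⧸ N`. -/
lemma isAssociatedPrime_sub_or_quot [IsNoetherianRing R] {M : Type*} [AddCommGroup M] [Module R M]
    {p : Ideal R} (hp : IsAssociatedPrime p M) (N : Submodule R M) :
    IsAssociatedPrime p N ∨ IsAssociatedPrime p (M ⧸ N) := by
  obtain ⟨hprime, x, hx⟩ := isAssociatedPrime_iff.mp hp
  by_cases h : ∃ a : R, a • x ∈ N ∧ a • x ≠ 0
  · obtain ⟨a, haN, ha0⟩ := h
    left
    refine isAssociatedPrime_iff.mpr ⟨hprime, ⟨⟨a • x, haN⟩, ?_⟩⟩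
    ext r
    rw [Submodule.mem_colon_singleton, Submodule.mem_bot]
    constructor
    · intro hr
      have hrx : r • x = 0 := by
        have := hx ▸ hr
        rwa [Submodule.mem_colon_singleton, Submodule.mem_bot] at this
      ext
      simp [smul_comm r a, hrx]
    · intro hr
      have : (r * a) • x = 0 := by
        have := congrArg (Subtype.val) hr
        simpa [mul_smul, smul_comm r a, mul_comm] using this
      have hra : r * a ∈ p := by
        rw [hx, Submodule.mem_colon_singleton, Submodule.mem_bot]; exact this
      rcases hprime.mem_or_mem hra with h1 | h2
      · exact h1
      · exfalso; apply ha0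
        rw [hx, Submodule.mem_colon_singleton, Submodule.mem_bot] at h2
        exact h2
  · right
    push_neg at h
    refine isAssociatedPrime_iff.mpr ⟨hprime, ⟨Submodule.Quotient.mk x, ?_⟩⟩
    ext r
    rw [Submodule.mem_colon_singleton, Submodule.mem_bot, ← Submodule.Quotient.mk_smul,
      Submodule.Quotient.mk_eq_zero]
    constructor
    · intro hr
      rw [hx, Submodule.mem_colon_singleton, Submodule.mem_bot] at hr
      rw [hr]
      exact N.zero_mem
    · intro hr
      rw [hx, Submodule.mem_colon_singleton, Submodule.mem_bot]
      exact h r hr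

lemma associatedPrimes_quot_prime_subset [IsNoetherianRing R] {p : Ideal R} (hp : p.IsPrime) :
    associatedPrimes R (R ⧸ p) ⊆ {p} := by
  intro q hq0
  obtain ⟨hq, y, hy⟩ := isAssociatedPrime_iff.mp hq0
  obtain ⟨r, rfl⟩ := Submodule.Quotient.mk_surjective p y
  by_cases hr : r ∈ p
  · exfalso
    apply hq.ne_top
    rw [hy, Ideal.eq_top_iff_one, Submodule.mem_colon_singleton, one_smul, Submodule.mem_bot,
      Submodule.Quotient.mk_eq_zero]
    exact hr
  · simp only [Set.mem_singleton_iff]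
    ext s
    rw [hy, Submodule.mem_colon_singleton, Submodule.mem_bot, ← Submodule.Quotient.mk_smul,
      Submodule.Quotient.mk_eq_zero, smul_eq_mul]
    exact ⟨fun h => (hp.mem_or_mem h).resolve_right hr, fun h => Ideal.mul_mem_right _ _ h⟩

lemma associatedPrimes_quotient_finite [IsNoetherianRing R] (N : Ideal R) :
    (associatedPrimes R (R ⧸ N)).Finite := by
  induction N using IsNoetherian.induction with
  | _ N ih =>
  by_cases hass : associatedPrimes R (R ⧸ N) = ∅
  · rw [hass]; exact Set.finite_empty
  obtain ⟨p, hpass⟩ := Set.nonempty_iff_ne_empty.mpr hass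
  obtain ⟨hp, x, hx⟩ := isAssociatedPrime_iff.mp hpass
  have hx0 : x ≠ 0 := by
    rintro rfl
    apply hp.ne_top
    rw [hx, Ideal.eq_top_iff_one, Submodule.mem_colon_singleton, one_smul, Submodule.mem_bot]
  -- span of x is isomorphic to R ⧸ p
  let f := LinearMap.toSpanSingleton R (R ⧸ N) x
  have hker : LinearMap.ker f = p := by
    ext r
    rw [hx, Submodule.mem_colon_singleton, Submodule.mem_bot, LinearMap.mem_ker]
    rfl
  have e1 : (R ⧸ p) ≃ₗ[R] LinearMap.range f :=
    hker ▸ f.quotKerEquivRange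
  have e2 : LinearMap.range f = Submodule.span R {x} :=
    (LinearMap.span_singleton_eq_range R (R ⧸ N) x).symm
  set Nx : Submodule R (R ⧸ N) := Submodule.span R {x} with hNx
  let N' : Ideal R := Nx.comap N.mkQ
  have hNN' : N < N' := by
    obtain ⟨r, hr⟩ := Submodule.Quotient.mk_surjective N x
    refine lt_of_le_of_ne (fun a ha => ?_) (fun hEq => ?_)
    · show N.mkQ a ∈ Nx
      have : N.mkQ a = 0 := by
        rw [← Submodule.Quotient.mk_eq_zero] at ha; exact ha
      rw [this]; exact Nx.zero_mem
    · apply hx0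
      have hrN' : r ∈ N' := by
        show N.mkQ r ∈ Nx
        rw [show N.mkQ r = x from hr]
        exact Submodule.mem_span_singleton_self x
      rw [← hEq] at hrN'
      rw [← hr, Submodule.Quotient.mk_eq_zero]
      exact hrN'
  have hmap : Submodule.map N.mkQ N' = Nx :=
    Submodule.map_comap_eq_of_surjective (f := N.mkQ) (Submodule.mkQ_surjective N) Nx
  have e3 : ((R ⧸ N) ⧸ Nx) ≃ₗ[R] R ⧸ N' := by
    rw [← hmap]
    exact Submodule.quotientQuotientEquivQuotient N N' hNN'.le
  have hsub : associatedPrimes R (R ⧸ N) ⊆ {p} ∪ associatedPrimes R (R ⧸ N') := by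
    intro q hq
    rcases isAssociatedPrime_sub_or_quot hq Nx with h1 | h2
    · left
      have : q ∈ associatedPrimes R (R ⧸ p) := by
        rw [LinearEquiv.AssociatedPrimes.eq (e1 ≪≫ₗ LinearEquiv.ofEq _ _ e2)]
        exact h1
      exact associatedPrimes_quot_prime_subset hp this
    · right
      rw [← LinearEquiv.AssociatedPrimes.eq e3]
      exact h2
  exact Set.Finite.subset ((Set.finite_singleton p).union (ih N' hNN')) hsub

lemma associatedPrimes_self_finite (R : Type*) [CommRing R] [IsNoetherianRing R] :
    (associatedPrimes R R).Finite := by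
  have := associatedPrimes_quotient_finite (R := R) ⊥
  rwa [LinearEquiv.AssociatedPrimes.eq (Submodule.quotEquivOfEqBot ⊥ rfl)] at this

lemma exists_nonZeroDivisor_of_forall_not_le [IsNoetherianRing R]
    {I : Ideal R} (h : ∀ p ∈ associatedPrimes R R, ¬ I ≤ p) :
    ∃ φ ∈ I, φ ∈ nonZeroDivisors R := by
  have hfin := associatedPrimes_self_finite R
  by_contra hc
  push_neg at hc
  have hsub : (I : Set R) ⊆ ⋃ p ∈ hfin.toFinset, (p : Set R) := by
    intro φ hφ
    have := hc φ hφ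
    have hzd : φ ∈ { r : R | ∃ x : R, x ≠ 0 ∧ r • x = 0 } := by
      by_contra hnzd
      apply this
      rw [mem_nonZeroDivisors_iff_right]
      intro x hx
      by_contra hx0
      exact hnzd ⟨x, hx0, by rw [smul_eq_mul, mul_comm]; exact hx⟩
    rw [← biUnion_associatedPrimes_eq_zero_divisors R R] at hzd
    simpa using hzd
  have := (Ideal.subset_union_prime (⊥ : Ideal R) ⊥
    (fun p hp _ _ => (Set.Finite.mem_toFinset hfin |>.mp hp).isPrime)).mp hsub
  obtain ⟨p, hps, hIp⟩ := this
  exact h p (hfin.mem_toFinset.mp hps) hIp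




/-- Let S be a finite modification of the Noetherian ring R centered at
V(I), where V(I) contains no associated prime of R. Then there is a non-zerodivisor
φ ∈ R with φ·S ⊆ R; consequently if the (punctual) normalization of R (the integral
closure of R in an ambient algebra Q ⊇ S) is a finite R-module then the corresponding
normalization of S is a finite S-module. -/
theorem stmt13 (R S : Type) [CommRing R] [IsNoetherianRing R] [CommRing S] [Algebra R S]
    (hinj : Function.Injective (algebraMap R S)) [Module.Finite R S]
    (I : Ideal R)
    (hIass : ∀ p ∈ associatedPrimes R R, ¬ I ≤ p)
    (n : ℕ)
    (hcoker : ∀ s : S, ∀ y ∈ I ^ n, algebraMap R S y * s ∈ (algebraMap R S).range)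
    (hSass : ∀ q ∈ associatedPrimes S S, ¬ Ideal.map (algebraMap R S) I ≤ q) :
    ∃ φ ∈ nonZeroDivisors R,
      (∀ s : S, algebraMap R S φ * s ∈ (algebraMap R S).range) ∧
      (∀ (Q : Type) (_ : CommRing Q) (_ : Algebra R Q) (_ : Algebra S Q),
        ∀ (_ : IsScalarTower R S Q),
        Module.Finite R (integralClosure R Q) → Module.Finite S (integralClosure S Q)) := by
  obtain ⟨φ₀, hφ₀I, hφ₀nzd⟩ := exists_nonZeroDivisor_of_forall_not_le hIass
  refine ⟨φ₀ ^ n, pow_mem hφ₀nzd n, fun s => hcoker s _ (Ideal.pow_mem_pow hφ₀I n), ?_⟩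
  intro Q _ _ _ hTower hfin
  haveI : Algebra.IsIntegral R S := Algebra.IsIntegral.of_finite R S
  have hset : ∀ x : Q, x ∈ integralClosure S Q ↔ x ∈ integralClosure R Q := by
    intro x
    exact ⟨fun hx => isIntegral_trans x hx, fun hx => hx.tower_top⟩
  have hfg : (Subalgebra.toSubmodule (integralClosure R Q)).FG :=
    Module.Finite.iff_fg.mp hfin
  obtain ⟨T, hT⟩ := hfg
  have hfgS : (Subalgebra.toSubmodule (integralClosure S Q)).FG := by
    refine ⟨T, le_antisymm (Submodule.span_le.mpr fun t ht => ?_) fun x hx => ?_⟩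
    · have : t ∈ Subalgebra.toSubmodule (integralClosure R Q) := by
        rw [← hT]; exact Submodule.subset_span ht
      exact (Subalgebra.mem_toSubmodule _).mpr ((hset t).mpr ((Subalgebra.mem_toSubmodule _).mp this))
    · have hxR : x ∈ Submodule.span R (T : Set Q) := by
        rw [hT]; exact (Subalgebra.mem_toSubmodule _).mpr ((hset x).mp ((Subalgebra.mem_toSubmodule _).mp hx))
      exact Submodule.span_le_restrictScalars R S (T : Set Q) hxR
  exact Module.Finite.iff_fg.mpr hfgS
end

section
/- Let R be a Noetherian local ring with maximal ideal m and I ⊆ R its nilradical. If the pair (m, Spec R) is seminormal (every finite modification centered at the closed point that is a universal homeomorphism preserving residue fields is an isomorphism), then depth_m I ≥ 2 whenever I ≠ 0 is not supported at m; in particular, every associated prime W of I satisfies codim_W(V(m) ∩ W) ≥ 2. -/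
lemma aux_ann_eq_colon {R M : Type*} [CommRing R] [AddCommGroup M] [Module R M] (x : M) :
    (⊥ : Submodule R M).colon {x} = (Submodule.span R {x}).annihilator := by
  ext z
  rw [Submodule.mem_colon_singleton, Submodule.mem_bot, Submodule.mem_annihilator_span_singleton]

lemma aux_ass_iff {R M : Type*} [CommRing R] [AddCommGroup M] [Module R M] [IsNoetherianRing R]
    {p : Ideal R} :
    p ∈ associatedPrimes R M ↔ p.IsPrime ∧ ∃ x : M, p = (Submodule.span R {x}).annihilator := by
  rw [AssociatedPrimes.mem_iff, isAssociatedPrime_iff]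
  simp only [aux_ann_eq_colon]

section AssFin

variable {R : Type*} [CommRing R] {M : Type*} [AddCommGroup M] [Module R M]

lemma aux_ass_subset_union [IsNoetherianRing R] (N : Submodule R M) :
    associatedPrimes R M ⊆ associatedPrimes R ↥N ∪ associatedPrimes R (M ⧸ N) := by
  rintro p hpm
  obtain ⟨hp, x, rfl⟩ := aux_ass_iff.mp hpm
  by_cases h : ∃ c : R, c • x ∈ N ∧ c • x ≠ 0
  · obtain ⟨c, hcN, hc0⟩ := h
    have hcp : c ∉ (Submodule.span R {x}).annihilator := by
      rw [Submodule.mem_annihilator_span_singleton]; exact hc0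
    left
    refine aux_ass_iff.mpr ⟨hp, ⟨⟨c • x, hcN⟩, ?_⟩⟩
    ext z
    rw [Submodule.mem_annihilator_span_singleton, Submodule.mem_annihilator_span_singleton]
    constructor
    · intro hz
      ext
      show z • (c • x) = 0
      rw [smul_comm, hz, smul_zero]
    · intro hz
      have : (z * c) • x = 0 := by
        have := congrArg (Subtype.val) hz
        simpa [mul_smul] using this
      have hmem : z * c ∈ (Submodule.span R {x}).annihilator :=
        (Submodule.mem_annihilator_span_singleton _ _).mpr this
      rcases hp.mem_or_mem hmem with h1 | h2
      · exact (Submodule.mem_annihilator_span_singleton _ _).mp h1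
      · exact absurd h2 hcp
  · right
    push_neg at h
    refine aux_ass_iff.mpr ⟨hp, ⟨Submodule.Quotient.mk x, ?_⟩⟩
    ext z
    rw [Submodule.mem_annihilator_span_singleton, Submodule.mem_annihilator_span_singleton,
      ← Submodule.Quotient.mk_smul, Submodule.Quotient.mk_eq_zero]
    constructor
    · intro hz; rw [hz]; exact N.zero_mem
    · intro hz
      exact h z hz

lemma aux_ass_span_singleton [IsNoetherianRing R] {p : Ideal R} (hp : p.IsPrime) (x : M)
    (hx : p = (Submodule.span R {x}).annihilator) :
    associatedPrimes R ↥(Submodule.span R {x}) ⊆ {p} := by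
  rintro q hqm
  obtain ⟨hq, y, rfl⟩ := aux_ass_iff.mp hqm
  obtain ⟨c, hc⟩ := Submodule.mem_span_singleton.mp y.2
  by_cases hy0 : y = 0
  · exfalso
    apply hq.ne_top
    rw [hy0, Submodule.span_singleton_eq_bot.mpr rfl, Submodule.annihilator_bot]
  have hcx0 : c • x ≠ 0 := by
    intro hcx
    apply hy0
    apply Subtype.ext
    show (y : M) = ((0 : ↥(Submodule.span R {x})) : M)
    rw [← hc, hcx]; simp
  have hcp : c ∉ p := by
    rw [hx, Submodule.mem_annihilator_span_singleton]
    exact hcx0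
  have : (Submodule.span R {y}).annihilator = p := by
    ext z
    rw [Submodule.mem_annihilator_span_singleton]
    constructor
    · intro hz
      have : (z * c) • x = 0 := by
        have h2 := congrArg (Subtype.val) hz
        rw [mul_smul, hc]
        simpa using h2
      have hmem : z * c ∈ p := by
        rw [hx, Submodule.mem_annihilator_span_singleton]; exact this
      rcases hp.mem_or_mem hmem with h1 | h2
      · exact h1
      · exact absurd h2 hcp
    · intro hz
      ext
      show z • (y : M) = 0
      rw [← hc, smul_comm]
      have : z • x = 0 := by
        rw [hx, Submodule.mem_annihilator_span_singleton] at hz; exact hz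
      rw [this, smul_zero]
  simp [← this]

lemma aux_ass_quot_finite [IsNoetherianRing R] [Module.Finite R M] (N : Submodule R M) :
    (associatedPrimes R (M ⧸ N)).Finite := by
  haveI : IsNoetherian R M := isNoetherian_of_isNoetherianRing_of_finite R M
  induction N using IsNoetherian.induction with
  | _ N ih =>
    by_cases hN : N = ⊤
    · subst hN
      haveI : Subsingleton (M ⧸ (⊤ : Submodule R M)) :=
        Submodule.Quotient.subsingleton_iff.mpr rfl
      rw [associatedPrimes.eq_empty_of_subsingleton]
      exact Set.finite_empty
    · haveI : Nontrivial (M ⧸ N) :=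
        (Submodule.Quotient.nontrivial_iff (p := N)).mpr hN
      obtain ⟨p, hp⟩ := associatedPrimes.nonempty R (M ⧸ N)
      obtain ⟨hppr, xbar, hxbar⟩ := aux_ass_iff.mp hp
      obtain ⟨x, rfl⟩ := Submodule.Quotient.mk_surjective N xbar
      have hxN : x ∉ N := by
        intro hx
        apply hppr.ne_top
        rw [hxbar, (Submodule.Quotient.mk_eq_zero N).mpr hx,
          Submodule.span_singleton_eq_bot.mpr rfl, Submodule.annihilator_bot]
      set N' : Submodule R M := N ⊔ Submodule.span R {x} with hN'
      have hlt : N < N' := by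
        refine lt_of_le_of_ne le_sup_left ?_
        intro hEq
        exact hxN (hEq ▸ Submodule.mem_sup_right (Submodule.mem_span_singleton_self x))
      have hmapN : Submodule.map N.mkQ N = ⊥ :=
        le_bot_iff.mp ((Submodule.map_le_iff_le_comap).mpr
          (by rw [Submodule.comap_bot, Submodule.ker_mkQ]))
      have hmap : Submodule.map N.mkQ N' =
          Submodule.span R {(Submodule.Quotient.mk x : M ⧸ N)} := by
        rw [hN', Submodule.map_sup, Submodule.map_span, Set.image_singleton, hmapN, bot_sup_eq,
          Submodule.mkQ_apply]
      have key : associatedPrimes R (M ⧸ N) ⊆ {p} ∪ associatedPrimes R (M ⧸ N') := by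
        intro q hq
        rcases aux_ass_subset_union
          (Submodule.span R {(Submodule.Quotient.mk x : M ⧸ N)}) hq with h1 | h2
        · left; exact aux_ass_span_singleton hppr _ hxbar h1
        · right
          have e : ((M ⧸ N) ⧸ (Submodule.span R {(Submodule.Quotient.mk x : M ⧸ N)})) ≃ₗ[R]
              (M ⧸ N') := hmap ▸ Submodule.quotientQuotientEquivQuotient N N' le_sup_left
          exact (LinearEquiv.AssociatedPrimes.eq e) ▸ h2
      exact ((Set.finite_singleton p).union (ih N' hlt)).subset key

lemma aux_ass_finite [IsNoetherianRing R] [Module.Finite R M] :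
    (associatedPrimes R M).Finite := by
  have e : (M ⧸ (⊥ : Submodule R M)) ≃ₗ[R] M := Submodule.quotEquivOfEqBot ⊥ rfl
  have := aux_ass_quot_finite (R := R) (M := M) ⊥
  rwa [LinearEquiv.AssociatedPrimes.eq e] at this

end AssFin

section Avoid

variable {R : Type*} [CommRing R] [IsLocalRing R] [IsNoetherianRing R]

lemma aux_exists_reg (M : Type*) [AddCommGroup M] [Module R M] [Module.Finite R M]
    (hm : IsLocalRing.maximalIdeal R ∉ associatedPrimes R M) :
    ∃ r ∈ IsLocalRing.maximalIdeal R, ∀ x : M, r • x = 0 → x = 0 := by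
  classical
  have hfin : (associatedPrimes R M).Finite := aux_ass_finite
  have hsub : ¬ ((IsLocalRing.maximalIdeal R : Set R) ⊆
      ⋃ p ∈ (hfin.toFinset : Set (Ideal R)), (p : Set R)) := by
    intro hss
    obtain ⟨p, hpT, hle⟩ := (Ideal.subset_union_prime (f := fun p : Ideal R => p) ⊥ ⊥
      (fun q hq _ _ => (hfin.mem_toFinset.mp hq).isPrime)).mp hss
    have hpAss := hfin.mem_toFinset.mp hpT
    have : p = IsLocalRing.maximalIdeal R :=
      le_antisymm (IsLocalRing.le_maximalIdeal hpAss.isPrime.ne_top) hle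
    exact hm (this ▸ hpAss)
  obtain ⟨r, hrm, hrn⟩ := Set.not_subset.mp hsub
  refine ⟨r, hrm, fun x hx => ?_⟩
  by_contra hx0
  apply hrn
  have : r ∈ ⋃ p ∈ associatedPrimes R M, (p : Set R) := by
    rw [biUnion_associatedPrimes_eq_zero_divisors]
    exact ⟨x, hx0, hx⟩
  simpa [Set.Finite.coe_toFinset] using this

/-- The ideal of elements killed by a power of the maximal ideal. -/
def mTor (R : Type*) [CommRing R] [IsLocalRing R] : Ideal R where
  carrier := {x | ∃ n : ℕ, ∀ y ∈ IsLocalRing.maximalIdeal R ^ n, y * x = 0}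
  zero_mem' := ⟨0, fun y _ => mul_zero y⟩
  add_mem' := by
    rintro a b ⟨n, hn⟩ ⟨k, hk⟩
    refine ⟨max n k, fun y hy => ?_⟩
    rw [mul_add, hn y (Ideal.pow_le_pow_right (le_max_left n k) hy),
      hk y (Ideal.pow_le_pow_right (le_max_right n k) hy), add_zero]
  smul_mem' := by
    rintro c a ⟨n, hn⟩
    refine ⟨n, fun y hy => ?_⟩
    rw [smul_eq_mul, ← mul_assoc, mul_comm y c, mul_assoc, hn y hy, mul_zero]

lemma mTor_killed : ∃ N : ℕ, ∀ x ∈ mTor R, ∀ y ∈ IsLocalRing.maximalIdeal R ^ N, y * x = 0 := by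
  classical
  obtain ⟨s, hs⟩ := IsNoetherian.noetherian (mTor R)
  have hss : (s : Set R) ⊆ (mTor R : Set R) := by
    rw [← hs]; exact Submodule.subset_span
  have hgen : ∀ t : Finset R, (t : Set R) ⊆ (mTor R : Set R) →
      ∃ N : ℕ, ∀ g ∈ t, ∀ y ∈ IsLocalRing.maximalIdeal R ^ N, y * g = 0 := by
    intro t
    induction t using Finset.induction_on with
    | empty => exact fun _ => ⟨0, by simp⟩
    | @insert a t ha ih =>
      intro hsub
      have hat : a ∈ mTor R := hsub (by simp)
      obtain ⟨n, hn⟩ := hat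
      obtain ⟨N0, hN0⟩ := ih (fun z hz => hsub (by simp [Finset.mem_coe.mp hz]))
      refine ⟨max n N0, fun g hg y hy => ?_⟩
      rcases Finset.mem_insert.mp hg with rfl | hg
      · exact hn y (Ideal.pow_le_pow_right (le_max_left n N0) hy)
      · exact hN0 g hg y (Ideal.pow_le_pow_right (le_max_right n N0) hy)
  obtain ⟨N, hN⟩ := hgen s hss
  refine ⟨N, fun x hx y hy => ?_⟩
  rw [← hs] at hx
  induction hx using Submodule.span_induction with
  | mem x hxs => exact hN x hxs y hy
  | zero => exact mul_zero y
  | add x z _ _ h1 h2 => rw [mul_add, h1, h2, add_zero]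
  | smul c x _ h => rw [smul_eq_mul, ← mul_assoc, mul_comm y c, mul_assoc, h, mul_zero]

end Avoid


lemma aux_not_ass_of_unit_reg {R S : Type*} [CommRing R] [CommRing S] (φ : R →+* S)
    {m : Ideal R} (hm : m.IsPrime) (r : R) (hr : r ∈ m)
    (hreg : ∀ s : S, φ r * s = 0 → s = 0) :
    (letI := φ.toAlgebra; m ∉ associatedPrimes R S) := by
  letI := φ.toAlgebra
  rintro ⟨hpr, w, hw⟩
  have hr_ann : r ∈ ((⊥ : Submodule R S).colon {w}).radical := hw ▸ hr
  obtain ⟨n, hn⟩ := hr_ann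
  rw [Submodule.mem_colon_singleton, Submodule.mem_bot, Algebra.smul_def, map_pow] at hn
  have hpow : ∀ n : ℕ, ∀ s : S, φ r ^ n * s = 0 → s = 0 := by
    intro n
    induction n with
    | zero => intro s h; simpa using h
    | succ n ih => intro s h; exact hreg s (ih _ (by rw [← mul_assoc, ← pow_succ]; exact h))
  have hw0 : w = 0 := hpow n w hn
  rw [hw0] at hw
  apply hpr.ne_top
  rw [hw]
  simp

set_option maxHeartbeats 400000 in
lemma aux_not_ass_quot (R : Type*) [CommRing R] [IsLocalRing R] [IsNoetherianRing R] :
    (letI := (Ideal.Quotient.mk (mTor R)).toAlgebra;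
      IsLocalRing.maximalIdeal R ∉ associatedPrimes R (R ⧸ mTor R)) := by
  letI := (Ideal.Quotient.mk (mTor R)).toAlgebra
  obtain ⟨N, hN⟩ := mTor_killed (R := R)
  intro hass
  obtain ⟨hpr, w, hw⟩ := aux_ass_iff.mp hass
  obtain ⟨a, rfl⟩ := Ideal.Quotient.mk_surjective w
  have hma : ∀ y ∈ IsLocalRing.maximalIdeal R, y * a ∈ mTor R := by
    intro y hy
    have hy_ann : y ∈ (Submodule.span R {Ideal.Quotient.mk (mTor R) a}).annihilator := hw ▸ hy
    have h1 : y • Ideal.Quotient.mk (mTor R) a = 0 :=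
      (Submodule.mem_annihilator_span_singleton _ _).mp hy_ann
    have h2 : Ideal.Quotient.mk (mTor R) (y * a) = 0 := by
      rw [map_mul]; exact h1
    exact Ideal.Quotient.eq_zero_iff_mem.mp h2
  have haJ : a ∈ mTor R := by
    refine ⟨N + 1, fun z hz => ?_⟩
    rw [pow_succ] at hz
    refine Submodule.mul_induction_on hz (fun u hu v hv => ?_) (fun p q hp hq => ?_)
    · rw [mul_assoc]
      exact hN (v * a) (hma v hv) u hu
    · rw [add_mul, hp, hq, add_zero]
  have hw0 : Ideal.Quotient.mk (mTor R) a = 0 := Ideal.Quotient.eq_zero_iff_mem.mpr haJ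
  rw [hw0, Submodule.span_zero_singleton, Submodule.annihilator_bot] at hw
  exact hpr.ne_top hw

set_option maxHeartbeats 1000000 in
set_option synthInstance.maxHeartbeats 100000 in
lemma key_step (R : Type) [CommRing R] [IsLocalRing R] [IsNoetherianRing R]
    (hsn : ∀ (S : Type) (_ : CommRing S) (φ : R →+* S),
      (letI := φ.toAlgebra; Module.Finite R S) →
      (∃ n : ℕ,
        (∀ x ∈ RingHom.ker φ, ∀ y ∈ (IsLocalRing.maximalIdeal R) ^ n, y * x = 0) ∧
        (∀ s : S, ∀ y ∈ (IsLocalRing.maximalIdeal R) ^ n, φ y * s ∈ φ.range)) →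
      (letI := φ.toAlgebra; IsLocalRing.maximalIdeal R ∉ associatedPrimes R S) →
      Function.Bijective (PrimeSpectrum.comap φ) →
      (∀ q : PrimeSpectrum S, ∀ s : S, ∃ r : R, s - φ r ∈ q.asIdeal) →
      Function.Bijective φ)
    (r x : R) (hr : r ∈ IsLocalRing.maximalIdeal R)
    (hreg : ∀ a : R, r * a = 0 → a = 0)
    (hx : x ∈ nilradical R)
    (hmx : ∀ y ∈ IsLocalRing.maximalIdeal R, y * x ∈ Ideal.span {r} * nilradical R) :
    x ∈ Ideal.span {r} * nilradical R := by
  classical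
  set m := IsLocalRing.maximalIdeal R with hmdef
  set g : R →+* Localization.Away r := algebraMap R (Localization.Away r) with hgdef
  have hrnzd : r ∈ nonZeroDivisors R := mem_nonZeroDivisors_iff.mpr ⟨hreg, fun a ha => hreg a (by rwa [mul_comm])⟩
  have hMle : Submonoid.powers r ≤ nonZeroDivisors R := Submonoid.powers_le.mpr hrnzd
  have hginj : Function.Injective g := IsLocalization.injective (Localization.Away r) hMle
  have hu : IsUnit (g r) :=
    IsLocalization.map_units (Localization.Away r) (⟨r, Submonoid.mem_powers r⟩ : Submonoid.powers r)
  set u := hu.unit with hudef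
  have hu_val : (u : Localization.Away r) = g r := IsUnit.unit_spec hu
  set t : Localization.Away r := ↑u⁻¹ * g x with htdef
  have h_rt : g r * t = g x := by
    rw [htdef, ← mul_assoc, ← hu_val, Units.mul_inv, one_mul]
  obtain ⟨k, hk⟩ := mem_nilradical.mp hx
  have h_tnil : t ^ k = 0 := by
    rw [htdef, mul_pow, ← map_pow, hk, map_zero, mul_zero]
  have h_tm : ∀ y ∈ m, ∃ i ∈ nilradical R, g y * t = g i := by
    intro y hy
    obtain ⟨i, hiI, hieq⟩ := Ideal.mem_span_singleton_mul.mp (hmx y hy)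
    refine ⟨i, hiI, ?_⟩
    have h1 : g y * t = ↑u⁻¹ * g (y * x) := by
      rw [map_mul, htdef]; ring
    rw [h1, ← hieq, map_mul, ← hu_val, ← mul_assoc, Units.inv_mul, one_mul]
  set S0 := Algebra.adjoin R {t} with hS0def
  have htS : t ∈ S0 := Algebra.subset_adjoin rfl
  -- every element of S0 is congruent to a constant modulo a nilpotent
  have fact1 : ∀ v ∈ S0, ∃ a : R, IsNilpotent (v - g a) := by
    intro v hv
    induction hv using Algebra.adjoin_induction with
    | mem w hw =>
      rw [Set.mem_singleton_iff] at hw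
      subst hw
      exact ⟨0, ⟨k, by rw [map_zero, sub_zero, h_tnil]⟩⟩
    | algebraMap a => exact ⟨a, ⟨1, by rw [pow_one]; exact sub_self _⟩⟩
    | add v w _ _ ih1 ih2 =>
      obtain ⟨a, ha⟩ := ih1
      obtain ⟨b, hb⟩ := ih2
      refine ⟨a + b, ?_⟩
      have : v + w - g (a + b) = (v - g a) + (w - g b) := by rw [map_add]; ring
      rw [this]
      exact (Commute.all _ _).isNilpotent_add ha hb
    | mul v w _ _ ih1 ih2 =>
      obtain ⟨a, ha⟩ := ih1
      obtain ⟨b, hb⟩ := ih2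
      refine ⟨a * b, ?_⟩
      have : v * w - g (a * b) = (v - g a) * w + g a * (w - g b) := by rw [map_mul]; ring
      rw [this]
      exact (Commute.all _ _).isNilpotent_add
        ((Commute.all _ _).isNilpotent_mul_right ha) ((Commute.all _ _).isNilpotent_mul_left hb)
  -- multiplication by an element of m maps S0 into the image of R
  have fact2 : ∀ v ∈ S0, ∀ y ∈ m, ∃ a ∈ m, g y * v = g a := by
    intro v hv
    induction hv using Algebra.adjoin_induction with
    | mem w hw =>
      rw [Set.mem_singleton_iff] at hw
      subst hw
      intro y hy
      obtain ⟨i, hiI, hieq⟩ := h_tm y hy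
      exact ⟨i, nilradical_le_prime m hiI, hieq⟩
    | algebraMap b =>
      intro y hy
      exact ⟨y * b, Ideal.mul_mem_right b m hy, by rw [map_mul]⟩
    | add v w _ _ ih1 ih2 =>
      intro y hy
      obtain ⟨a, ham, ha⟩ := ih1 y hy
      obtain ⟨b, hbm, hb⟩ := ih2 y hy
      exact ⟨a + b, Ideal.add_mem m ham hbm, by rw [map_add, mul_add, ha, hb]⟩
    | mul v w _ _ ih1 ih2 =>
      intro y hy
      obtain ⟨a, ham, ha⟩ := ih1 y hy
      obtain ⟨b, hbm, hb⟩ := ih2 a ham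
      exact ⟨b, hbm, by rw [← mul_assoc, ha, hb]⟩
  have hint : IsIntegral R t :=
    ⟨Polynomial.X ^ k, Polynomial.monic_X_pow k, by
      simp [Polynomial.eval₂_X_pow, h_tnil]⟩
  have hfg : (Subalgebra.toSubmodule S0).FG := IsIntegral.fg_adjoin_singleton hint
  haveI hfinS : Module.Finite R ↥S0 := Module.Finite.iff_fg.mpr hfg
  set φ : R →+* ↥S0 := algebraMap R ↥S0 with hφdef
  have hφval : ∀ a : R, ((φ a : ↥S0) : Localization.Away r) = g a := fun a => rfl
  have hφinj : Function.Injective φ := fun a b h => hginj (congrArg Subtype.val h)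
  have hAlgEq : φ.toAlgebra = (inferInstance : Algebra R ↥S0) :=
    Algebra.algebra_ext _ _ (fun a => rfl)
  -- nilpotency transfer to S0
  have hnilS : ∀ (s : ↥S0) (c : R), IsNilpotent ((s : Localization.Away r) - g c) → IsNilpotent (s - φ c) := by
    rintro s c ⟨j, hj⟩
    refine ⟨j, ?_⟩
    apply Subtype.ext
    have : (((s - φ c) ^ j : ↥S0) : Localization.Away r) = ((s : Localization.Away r) - g c) ^ j := by
      push_cast [hφval]
      rfl
    rw [this, hj]
    rfl
  have hbij : Function.Bijective φ := by
    refine hsn ↥S0 _ φ ?_ ?_ ?_ ?_ ?_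
    · exact hAlgEq.symm ▸ hfinS
    · refine ⟨1, fun z hz y _ => ?_, fun s y hy => ?_⟩
      · have hz0 : z = 0 := hφinj (by rw [RingHom.mem_ker] at hz; rw [hz, map_zero])
        rw [hz0, mul_zero]
      · rw [pow_one] at hy
        obtain ⟨a, _, ha⟩ := fact2 s.val s.2 y hy
        refine ⟨a, ?_⟩
        apply Subtype.ext
        show (g a : Localization.Away r) = ((φ y * s : ↥S0) : Localization.Away r)
        rw [← ha]
        rfl
    · refine aux_not_ass_of_unit_reg φ (IsLocalRing.maximalIdeal.isMaximal R).isPrime r hr ?_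
      intro s hs
      have hval : g r * (s : Localization.Away r) = 0 := congrArg Subtype.val hs
      apply Subtype.ext
      have h5 := congrArg (fun z => (↑u⁻¹ : Localization.Away r) * z) hval
      simpa [← mul_assoc, ← hu_val, Units.inv_mul] using h5
    · constructor
      · have key : ∀ a b : PrimeSpectrum ↥S0, PrimeSpectrum.comap φ a = PrimeSpectrum.comap φ b →
            a.asIdeal ≤ b.asIdeal := by
          intro a b hab s hs
          obtain ⟨c, hcnil⟩ := fact1 s.val s.2
          have henil : IsNilpotent (s - φ c) := hnilS s c hcnil
          obtain ⟨j, hj⟩ := henil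
          have hmem : ∀ q : PrimeSpectrum ↥S0, s - φ c ∈ q.asIdeal := fun q =>
            q.isPrime.mem_of_pow_mem j (by rw [hj]; exact q.asIdeal.zero_mem)
          have hφca : φ c ∈ a.asIdeal := by
            have h2 : s - (s - φ c) = φ c := by ring
            rw [← h2]
            exact Ideal.sub_mem _ hs (hmem a)
          have hcc : c ∈ a.asIdeal.comap φ := Ideal.mem_comap.mpr hφca
          have hIdEq : a.asIdeal.comap φ = b.asIdeal.comap φ := by
            have := congrArg PrimeSpectrum.asIdeal hab
            rwa [PrimeSpectrum.comap_asIdeal, PrimeSpectrum.comap_asIdeal] at this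
          have hφcb : φ c ∈ b.asIdeal := Ideal.mem_comap.mp (hIdEq ▸ hcc)
          have h3 : s = φ c + (s - φ c) := by ring
          rw [h3]
          exact Ideal.add_mem _ hφcb (hmem b)
        intro q1 q2 h
        exact PrimeSpectrum.ext (le_antisymm (key q1 q2 h) (key q2 q1 h.symm))
      · intro p
        haveI : Algebra.IsIntegral R ↥S0 := Algebra.IsIntegral.of_finite R ↥S0
        have hker : (⊥ : Ideal ↥S0).comap (algebraMap R ↥S0) ≤ p.asIdeal := by
          intro a ha
          rw [Ideal.mem_comap, Ideal.mem_bot] at ha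
          have : a = 0 := hφinj (by rw [ha, map_zero])
          rw [this]
          exact p.asIdeal.zero_mem
        obtain ⟨Q, _, hQpr, hQc⟩ :=
          Ideal.exists_ideal_over_prime_of_isIntegral p.asIdeal ⊥ hker
        refine ⟨⟨Q, hQpr⟩, ?_⟩
        apply PrimeSpectrum.ext
        rw [PrimeSpectrum.comap_asIdeal]
        exact hQc
    · intro q s
      obtain ⟨c, hcnil⟩ := fact1 s.val s.2
      obtain ⟨j, hj⟩ := hnilS s c hcnil
      exact ⟨c, q.isPrime.mem_of_pow_mem j (by rw [hj]; exact q.asIdeal.zero_mem)⟩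
  obtain ⟨a, haeq⟩ := hbij.2 ⟨t, htS⟩
  have hga : g a = t := by
    have := congrArg Subtype.val haeq
    rw [← hφval a]
    exact this
  have hxa : r * a = x := by
    apply hginj
    rw [map_mul, hga, h_rt]
  have hanil : a ∈ nilradical R := by
    rw [mem_nilradical]
    refine ⟨k, hginj ?_⟩
    rw [map_pow, hga, h_tnil, map_zero]
  exact Ideal.mem_span_singleton_mul.mpr ⟨a, hanil, hxa⟩


set_option maxHeartbeats 1000000 in


/-- If (R,m) is Noetherian local with nilradical I ≠ 0 not supported at m,
and the pair (m, Spec R) is seminormal (every finite modification centered at the closed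
point that is a universal homeomorphism preserving residue fields is an isomorphism),
then depth_m I ≥ 2; in particular every associated prime of I has quotient of Krull
dimension ≥ 2. -/
theorem stmt16 (R : Type) [CommRing R] [IsLocalRing R] [IsNoetherianRing R]
    (hsn : ∀ (S : Type) (_ : CommRing S) (φ : R →+* S),
      (letI := φ.toAlgebra; Module.Finite R S) →
      (∃ n : ℕ,
        (∀ x ∈ RingHom.ker φ, ∀ y ∈ (IsLocalRing.maximalIdeal R) ^ n, y * x = 0) ∧
        (∀ s : S, ∀ y ∈ (IsLocalRing.maximalIdeal R) ^ n, φ y * s ∈ φ.range)) →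
      (letI := φ.toAlgebra; IsLocalRing.maximalIdeal R ∉ associatedPrimes R S) →
      Function.Bijective (PrimeSpectrum.comap φ) →
      (∀ q : PrimeSpectrum S, ∀ s : S, ∃ r : R, s - φ r ∈ q.asIdeal) →
      Function.Bijective φ)
    (hne : nilradical R ≠ ⊥)
    (hsupp : ¬ ∃ n : ℕ, (IsLocalRing.maximalIdeal R) ^ n * nilradical R = ⊥) :
    (∃ r ∈ IsLocalRing.maximalIdeal R,
      (∀ x ∈ nilradical R, r * x = 0 → x = 0) ∧
      ∃ s ∈ IsLocalRing.maximalIdeal R,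
        ∀ x ∈ nilradical R,
          s * x ∈ Ideal.span {r} * nilradical R → x ∈ Ideal.span {r} * nilradical R) ∧
    (∀ p ∈ associatedPrimes R (↥(nilradical R)),
      ((2 : ℕ) : WithBot (WithTop ℕ)) ≤ ringKrullDim (R ⧸ p)) := by
  classical
  -- m-power-torsion elements are nilpotent
  have hnil_of_tor : ∀ z : R, ∀ n : ℕ, (∀ y ∈ IsLocalRing.maximalIdeal R ^ n, y * z = 0) →
      z ∈ nilradical R := by
    intro z n hn
    by_cases hzu : IsUnit z
    · exfalso
      apply hsupp
      refine ⟨n, ?_⟩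
      have hbot : IsLocalRing.maximalIdeal R ^ n = ⊥ := by
        rw [eq_bot_iff]
        intro y hy
        obtain ⟨v, hv⟩ := hzu.exists_right_inv
        rw [Ideal.mem_bot]
        calc y = y * (z * v) := by rw [hv, mul_one]
        _ = y * z * v := by rw [mul_assoc]
        _ = 0 := by rw [hn y hy, zero_mul]
      rw [hbot, Ideal.bot_mul]
    · have hzm : z ∈ IsLocalRing.maximalIdeal R := hzu
      rw [mem_nilradical]
      exact ⟨n + 1, by rw [pow_succ]; exact hn (z ^ n) (Ideal.pow_mem_pow hzm n)⟩
  -- the m-torsion ideal is zero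
  have hJ0 : ∀ z ∈ mTor R, z = 0 := by
    obtain ⟨N, hN⟩ := mTor_killed (R := R)
    have hbij : Function.Bijective (Ideal.Quotient.mk (mTor R)) := by
      refine hsn (R ⧸ mTor R) _ (Ideal.Quotient.mk (mTor R)) ?_ ?_ ?_ ?_ ?_
      · exact RingHom.Finite.of_surjective _ Ideal.Quotient.mk_surjective
      · refine ⟨N, fun z hz y hy => hN z (by rwa [Ideal.mk_ker] at hz) y hy, fun s y _ => ?_⟩
        obtain ⟨c, rfl⟩ := Ideal.Quotient.mk_surjective s
        exact ⟨y * c, by rw [map_mul]⟩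
      · exact aux_not_ass_quot R
      · constructor
        · exact PrimeSpectrum.comap_injective_of_surjective _ Ideal.Quotient.mk_surjective
        · intro p
          have hJp : mTor R ≤ p.asIdeal := by
            rintro z ⟨n, hn⟩
            exact nilradical_le_prime p.asIdeal (hnil_of_tor z n hn)
          haveI hQpr : (p.asIdeal.map (Ideal.Quotient.mk (mTor R))).IsPrime :=
            Ideal.map_isPrime_of_surjective Ideal.Quotient.mk_surjective
              (by rw [Ideal.mk_ker]; exact hJp)
          refine ⟨⟨p.asIdeal.map (Ideal.Quotient.mk (mTor R)), hQpr⟩, ?_⟩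
          apply PrimeSpectrum.ext
          rw [PrimeSpectrum.comap_asIdeal]
          rw [Ideal.comap_map_of_surjective _ Ideal.Quotient.mk_surjective,
            ← RingHom.ker_eq_comap_bot, Ideal.mk_ker]
          exact sup_eq_left.mpr hJp
      · intro q s
        obtain ⟨c, rfl⟩ := Ideal.Quotient.mk_surjective s
        exact ⟨c, by simp⟩
    intro z hz
    have h1 : Ideal.Quotient.mk (mTor R) z = Ideal.Quotient.mk (mTor R) 0 := by
      rw [map_zero]
      exact Ideal.Quotient.eq_zero_iff_mem.mpr hz
    exact hbij.1 h1
  -- the maximal ideal is not an associated prime of R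
  have hnotassR : IsLocalRing.maximalIdeal R ∉ associatedPrimes R R := by
    intro hass
    obtain ⟨hpr, w, hw⟩ := aux_ass_iff.mp hass
    have hwJ : w ∈ mTor R := by
      refine ⟨1, fun y hy => ?_⟩
      rw [pow_one] at hy
      have hy_ann : y ∈ (Submodule.span R {w}).annihilator := by rw [← hw]; exact hy
      have := (Submodule.mem_annihilator_span_singleton _ _).mp hy_ann
      rwa [smul_eq_mul] at this
    have hw0 : w = 0 := hJ0 w hwJ
    rw [hw0, Submodule.span_zero_singleton, Submodule.annihilator_bot] at hw
    exact hpr.ne_top hw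
  obtain ⟨r, hrm, hrreg⟩ := aux_exists_reg R hnotassR
  have hreg : ∀ a : R, r * a = 0 → a = 0 := fun a ha => hrreg a (by rwa [smul_eq_mul])
  have C2 : ∀ x ∈ nilradical R, (∀ y ∈ IsLocalRing.maximalIdeal R,
      y * x ∈ Ideal.span {r} * nilradical R) → x ∈ Ideal.span {r} * nilradical R :=
    fun x hx hmx => key_step R hsn r x hrm hreg hx hmx
  haveI hIfin : Module.Finite R ↥(nilradical R) :=
    Module.Finite.iff_fg.mpr (IsNoetherian.noetherian _)
  set Nsub : Submodule R ↥(nilradical R) :=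
    Submodule.comap (nilradical R).subtype (Ideal.span {r} * nilradical R) with hNsubdef
  haveI : Module.Finite R (↥(nilradical R) ⧸ Nsub) :=
    Module.Finite.of_surjective Nsub.mkQ (Submodule.mkQ_surjective _)
  have hmemNsub : ∀ v : ↥(nilradical R), v ∈ Nsub ↔ (v : R) ∈ Ideal.span {r} * nilradical R :=
    fun v => Iff.rfl
  have hnotassQ : IsLocalRing.maximalIdeal R ∉ associatedPrimes R (↥(nilradical R) ⧸ Nsub) := by
    intro hass
    obtain ⟨hpr, wb, hwb⟩ := aux_ass_iff.mp hass
    obtain ⟨w, rfl⟩ := Submodule.mkQ_surjective Nsub wb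
    have hmw : ∀ y ∈ IsLocalRing.maximalIdeal R, y * (w : R) ∈ Ideal.span {r} * nilradical R := by
      intro y hy
      have hy_ann : y ∈ (Submodule.span R {Nsub.mkQ w}).annihilator := by rw [← hwb]; exact hy
      have h1 := (Submodule.mem_annihilator_span_singleton _ _).mp hy_ann
      rw [← map_smul, Submodule.mkQ_apply, Submodule.Quotient.mk_eq_zero] at h1
      have h2 := (hmemNsub _).mp h1
      simpa [Submodule.coe_smul, smul_eq_mul] using h2
    have hwN : w ∈ Nsub := (hmemNsub w).mpr (C2 (w : R) w.2 hmw)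
    have hwb0 : Nsub.mkQ w = 0 := (Submodule.Quotient.mk_eq_zero _).mpr hwN
    rw [hwb0, Submodule.span_zero_singleton, Submodule.annihilator_bot] at hwb
    exact hpr.ne_top hwb
  obtain ⟨s, hsm, hsreg⟩ := aux_exists_reg _ hnotassQ
  have hs_prop : ∀ z ∈ nilradical R, s * z ∈ Ideal.span {r} * nilradical R →
      z ∈ Ideal.span {r} * nilradical R := by
    intro z hzI hs
    have hval : ((s • (⟨z, hzI⟩ : ↥(nilradical R)) : ↥(nilradical R)) : R) = s * z := by
      simp [smul_eq_mul]
    have hmem : s • (⟨z, hzI⟩ : ↥(nilradical R)) ∈ Nsub := by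
      rw [hmemNsub, hval]
      exact hs
    have h1 : s • (Nsub.mkQ (⟨z, hzI⟩ : ↥(nilradical R))) = 0 := by
      rw [← map_smul, Submodule.mkQ_apply, Submodule.Quotient.mk_eq_zero]
      exact hmem
    have h2 := hsreg _ h1
    rw [Submodule.mkQ_apply, Submodule.Quotient.mk_eq_zero] at h2
    exact (hmemNsub _).mp h2
  refine ⟨⟨r, hrm, fun z _ h0 => hreg z h0, s, hsm, hs_prop⟩, ?_⟩
  -- Part B: associated primes of the nilradical have quotient dimension ≥ 2
  rintro p hpass
  obtain ⟨hppr, w, hw⟩ := aux_ass_iff.mp hpass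
  have hw0 : w ≠ 0 := by
    intro h
    rw [h, Submodule.span_zero_singleton, Submodule.annihilator_bot] at hw
    exact hppr.ne_top hw
  have hpw : ∀ π ∈ p, π * (w : R) = 0 := by
    intro π hπ
    have hπann : π ∈ (Submodule.span R {w}).annihilator := by rw [← hw]; exact hπ
    have h1 := (Submodule.mem_annihilator_span_singleton _ _).mp hπann
    have h2 := congrArg (Subtype.val) h1
    simpa [smul_eq_mul] using h2
  have hrp : r ∉ p := by
    intro hrp
    apply hw0
    apply Subtype.ext
    have := hreg _ (hpw r hrp)
    simpa using this
  have hpm : p ≤ IsLocalRing.maximalIdeal R := IsLocalRing.le_maximalIdeal hppr.ne_top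
  -- there is a prime strictly between p and m
  have hq : ∃ q : Ideal R, q.IsPrime ∧ p < q ∧ q < IsLocalRing.maximalIdeal R := by
    by_contra hnq
    push_neg at hnq
    have hrad : IsLocalRing.maximalIdeal R ≤ (p ⊔ Ideal.span {r}).radical := by
      rw [Ideal.radical_eq_sInf]
      refine le_sInf ?_
      rintro J ⟨hPJ, hJpr⟩
      haveI := hJpr
      have h1 : p < J := lt_of_le_of_ne (le_trans le_sup_left hPJ)
        (by rintro rfl; exact hrp (hPJ (Submodule.mem_sup_right
          (Submodule.mem_span_singleton_self r))))
      have h2 : J ≤ IsLocalRing.maximalIdeal R := IsLocalRing.le_maximalIdeal hJpr.ne_top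
      rcases eq_or_lt_of_le h2 with h3 | h3
      · exact le_of_eq h3.symm
      · exact absurd h3 (hnq J hJpr h1)
    obtain ⟨kk, hkk⟩ := Ideal.exists_pow_le_of_le_radical_of_fg hrad (IsNoetherian.noetherian _)
    have hsk : s ^ kk ∈ p ⊔ Ideal.span {r} := hkk (Ideal.pow_mem_pow hsm kk)
    obtain ⟨π, hπp, zz, hzz, hsum⟩ := Submodule.mem_sup.mp hsk
    obtain ⟨c, hc⟩ := Ideal.mem_span_singleton'.mp hzz
    -- descend powers of s
    have hdesc : ∀ (j : ℕ) (v : R), v ∈ nilradical R →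
        s ^ j * v ∈ Ideal.span {r} * nilradical R → v ∈ Ideal.span {r} * nilradical R := by
      intro j
      induction j with
      | zero => intro v hv h; rwa [pow_zero, one_mul] at h
      | succ j ih =>
        intro v hv h
        rw [pow_succ', mul_assoc] at h
        have hmem : s ^ j * v ∈ nilradical R := Ideal.mul_mem_left _ _ hv
        exact ih v hv (hs_prop _ hmem h)
    -- step: p-killed elements of the nilradical lie in r * nilradical
    have hstep : ∀ v : R, v ∈ nilradical R → (∀ π' ∈ p, π' * v = 0) →
        v ∈ Ideal.span {r} * nilradical R := by
      intro v hv hann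
      apply hdesc kk v hv
      have heq : s ^ kk * v = r * (c * v) := by
        calc s ^ kk * v = (π + zz) * v := by rw [hsum]
        _ = π * v + zz * v := by ring
        _ = zz * v := by rw [hann π hπp, zero_add]
        _ = r * (c * v) := by rw [← hc]; ring
      rw [heq]
      exact Ideal.mem_span_singleton_mul.mpr ⟨c * v, Ideal.mul_mem_left _ c hv, rfl⟩
    -- iterate to get w ∈ r^n * nilradical ⊆ m^n for all n
    have hiter : ∀ n : ℕ, ∃ v : R, v ∈ nilradical R ∧ (∀ π' ∈ p, π' * v = 0) ∧
        (w : R) = r ^ n * v := by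
      intro n
      induction n with
      | zero => exact ⟨(w : R), w.2, hpw, by rw [pow_zero, one_mul]⟩
      | succ n ih =>
        obtain ⟨v, hv, hann, heq⟩ := ih
        obtain ⟨z, hzI, hrz⟩ := Ideal.mem_span_singleton_mul.mp (hstep v hv hann)
        refine ⟨z, hzI, fun π' hπ' => ?_, ?_⟩
        · apply hreg
          calc r * (π' * z) = π' * (r * z) := by ring
          _ = π' * v := by rw [hrz]
          _ = 0 := hann π' hπ'
        · rw [heq, ← hrz]; ring
    have hwbot : (w : R) = 0 := by
      have hmem : ∀ n : ℕ, (w : R) ∈ IsLocalRing.maximalIdeal R ^ n := by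
        intro n
        obtain ⟨v, _, _, heq⟩ := hiter n
        rw [heq]
        exact Ideal.mul_mem_right v _ (Ideal.pow_mem_pow hrm n)
      have hbot := Ideal.iInf_pow_eq_bot_of_isLocalRing (I := IsLocalRing.maximalIdeal R)
        (Ideal.IsMaximal.ne_top (IsLocalRing.maximalIdeal.isMaximal R))
      have : (w : R) ∈ (⊥ : Ideal R) := hbot ▸ (Submodule.mem_iInf _).mpr hmem
      exact Ideal.mem_bot.mp this
    exact hw0 (Subtype.ext (by simpa using hwbot))
  obtain ⟨q, hqpr, hpq, hqm⟩ := hq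
  haveI := hqpr
  -- build a chain of length 2 in Spec (R/p)
  have hker : RingHom.ker (Ideal.Quotient.mk p) = p := Ideal.mk_ker
  haveI hP0 : (p.map (Ideal.Quotient.mk p)).IsPrime :=
    Ideal.map_isPrime_of_surjective Ideal.Quotient.mk_surjective (by rw [hker])
  haveI hP1 : (q.map (Ideal.Quotient.mk p)).IsPrime :=
    Ideal.map_isPrime_of_surjective Ideal.Quotient.mk_surjective (by rw [hker]; exact hpq.le)
  haveI hP2 : ((IsLocalRing.maximalIdeal R).map (Ideal.Quotient.mk p)).IsPrime :=
    Ideal.map_isPrime_of_surjective Ideal.Quotient.mk_surjective (by rw [hker]; exact hpm)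
  have hcomap : ∀ I : Ideal R, p ≤ I →
      (I.map (Ideal.Quotient.mk p)).comap (Ideal.Quotient.mk p) = I := by
    intro I hI
    rw [Ideal.comap_map_of_surjective _ Ideal.Quotient.mk_surjective,
      ← RingHom.ker_eq_comap_bot, hker]
    exact sup_eq_left.mpr hI
  have hlt1 : p.map (Ideal.Quotient.mk p) < q.map (Ideal.Quotient.mk p) := by
    refine lt_of_le_of_ne (Ideal.map_mono hpq.le) ?_
    intro hEq
    have := congrArg (Ideal.comap (Ideal.Quotient.mk p)) hEq
    rw [hcomap p le_rfl, hcomap q hpq.le] at this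
    exact hpq.ne this
  have hlt2 : q.map (Ideal.Quotient.mk p) <
      (IsLocalRing.maximalIdeal R).map (Ideal.Quotient.mk p) := by
    refine lt_of_le_of_ne (Ideal.map_mono hqm.le) ?_
    intro hEq
    have := congrArg (Ideal.comap (Ideal.Quotient.mk p)) hEq
    rw [hcomap q hpq.le, hcomap _ hpm] at this
    exact hqm.ne this
  let c0 : PrimeSpectrum (R ⧸ p) := ⟨p.map (Ideal.Quotient.mk p), hP0⟩
  let c1 : PrimeSpectrum (R ⧸ p) := ⟨q.map (Ideal.Quotient.mk p), hP1⟩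
  let c2 : PrimeSpectrum (R ⧸ p) := ⟨(IsLocalRing.maximalIdeal R).map (Ideal.Quotient.mk p), hP2⟩
  have hc01 : c0 < c1 := hlt1
  have hc12 : c1 < c2 := hlt2
  let ser : LTSeries (PrimeSpectrum (R ⧸ p)) :=
    ((RelSeries.singleton _ c0).snoc c1 hc01).snoc c2 (by exact hc12)
  have hlen := Order.LTSeries.length_le_krullDim ser
  have hlen2 : ser.length = 2 := rfl
  rw [hlen2] at hlen
  exact hlen
end
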